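/- arXiv:1205.0708 — 2 statements merged into one kernel-verified Lean document; each statement's English description precedes it below -/
import Mathlib

section
/- For every s = {(a_1,μ_1), …, (a_p,μ_p)} ∈ 𝒮_r^{(n)}, the tuple ∂_{n,r}(s) = (Q_1, …, Q_n) is an n-tuple of polynomials with constant term 1 which is dominant, with ratio polynomials Q_i(v^{i−1}u)/Q_{i+1}(v^{i+1}u) = P_i(u) = ∏_{j: μ_j = i}(1 − a_j u) for 1 ≤ i ≤ n−1, and with ∑_{i=1}^{n} deg Q_i = r; in other words, ∂_{n,r}(s) ∈ 𝒬(n)_r, so ∂_{n,r} is a well-defined map 𝒮_r^{(n)} → 𝒬(n)_r. -/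
/-!
STATEMENT 3.  Fix `v ∈ ℂ*` not a root of unity and `n, r ≥ 1`.  For every
`s = {(a_1,μ_1),…,(a_p,μ_p)} ∈ 𝒮_r^{(n)}`, the tuple `∂_{n,r}(s) = (Q_1,…,Q_n)` consists of
polynomials with constant term `1`, is dominant with ratio polynomials
`Q_i(v^{i-1}u)/Q_{i+1}(v^{i+1}u) = P_i(u) = ∏_{j : μ_j = i} (1 - a_j u)` for `1 ≤ i ≤ n-1`,
and satisfies `∑_{i=1}^n deg Q_i = r`; i.e. `∂_{n,r}(s) ∈ 𝒬(n)_r`.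

Tuples are indexed `0`-based: the `1`-based index `j` corresponds to the Lean index `j - 1`.
-/

noncomputable section

/-- `sclP c q` is the polynomial `u ↦ q(c·u)`. -/
def sclP (c : ℂ) (q : Polynomial ℂ) : Polynomial ℂ := q.comp (Polynomial.C c * Polynomial.X)

/-- Extend a tuple of polynomials by `1` beyond its index range. -/
def extT {m : ℕ} (Q : Fin m → Polynomial ℂ) (k : ℕ) : Polynomial ℂ :=
  if h : k < m then Q ⟨k, h⟩ else 1

/-- `Q ∈ 𝒬(n)`: each `Q_j` has constant term `1` and each ratio
`Q_j(v^{j-1}u)/Q_{j+1}(v^{j+1}u)` is a polynomial (`0`-based: `j = m + 1`). -/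
def DominantT (v : ℂ) {n : ℕ} (Q : Fin n → Polynomial ℂ) : Prop :=
  (∀ i, (Q i).coeff 0 = 1) ∧
    ∀ m : ℕ, m + 1 < n → sclP (v ^ (m + 2)) (extT Q (m + 1)) ∣ sclP (v ^ m) (extT Q m)

/-- `𝒮_r^{(n)}`: multisets of segments `(a, k)` (center `a ∈ ℂ*`, length `k`) with all lengths
in `[1, n]` and total length `r`. -/
def SegSet (n r : ℕ) : Set (Multiset (ℂ × ℕ)) :=
  {s | (∀ q ∈ s, q.1 ≠ 0 ∧ 1 ≤ q.2 ∧ q.2 ≤ n) ∧ (s.map Prod.snd).sum = r}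

/-- `P_i(u) = ∏_{j : μ_j = i} (1 - a_j u)`. -/
def PsegP (s : Multiset (ℂ × ℕ)) (i : ℕ) : Polynomial ℂ :=
  ((s.filter (fun q => q.2 = i)).map
    (fun q => 1 - Polynomial.C q.1 * Polynomial.X)).prod

/-- `Q_n(u) = ∏_{i : μ_i = n} (1 - a_i v^{-n+1} u)`. -/
def QlastP (v : ℂ) (n : ℕ) (s : Multiset (ℂ × ℕ)) : Polynomial ℂ :=
  ((s.filter (fun q => q.2 = n)).map
    (fun q => 1 - Polynomial.C (q.1 * v ^ (1 - (n : ℤ))) * Polynomial.X)).prod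

/-- The map `∂_{n,r}` (with `0`-based index `i`, i.e. `1`-based index `i + 1`):
`Q_{i+1}(u) = ∏_{k=i+1}^{n-1} P_k(u v^{k - 2(i+1) + 1}) · Q_n(u v^{2(n-(i+1))})` (`k` 1-based);
in particular the last entry is `Q_n = QlastP` (the product is then empty, the scaling trivial). -/
def dsegMap (v : ℂ) (n : ℕ) (s : Multiset (ℂ × ℕ)) : Fin n → Polynomial ℂ :=
  fun i =>
    (∏ k ∈ Finset.Icc ((i : ℕ) + 1) (n - 1),
        sclP (v ^ ((k : ℤ) - 2 * ((i : ℕ) : ℤ) - 1)) (PsegP s k)) *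
      sclP (v ^ (2 * ((n : ℤ) - (((i : ℕ) : ℤ) + 1)))) (QlastP v n s)

/-- `𝒬(n)_r`: dominant `n`-tuples whose degrees sum to `r`. -/
def QSet (v : ℂ) (n r : ℕ) : Set (Fin n → Polynomial ℂ) :=
  {Q | DominantT v Q ∧ ∑ i ∈ Finset.range n, (extT Q i).natDegree = r}

open Polynomial in
lemma sclP_one (q : Polynomial ℂ) : sclP 1 q = q := by simp [sclP]

open Polynomial in
lemma sclP_mul (c : ℂ) (p q : Polynomial ℂ) : sclP c (p*q) = sclP c p * sclP c q := by
  simp [sclP, mul_comp]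

open Polynomial in
lemma sclP_sclP (c d : ℂ) (q : Polynomial ℂ) : sclP c (sclP d q) = sclP (c*d) q := by
  unfold sclP
  rw [comp_assoc]
  congr 1
  simp [mul_comp]
  ring

open Polynomial in
lemma sclP_prod (c : ℂ) (t : Finset ℕ) (f : ℕ → Polynomial ℂ) :
    sclP c (∏ k ∈ t, f k) = ∏ k ∈ t, sclP c (f k) := by
  classical
  induction t using Finset.induction with
  | empty => simp [sclP]
  | insert _ _ h ih => rw [Finset.prod_insert h, Finset.prod_insert h, sclP_mul, ih]

open Polynomial in
lemma sclP_coeff_zero (c : ℂ) (q : Polynomial ℂ) : (sclP c q).coeff 0 = q.coeff 0 := by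
  simp [sclP, coeff_zero_eq_eval_zero, eval_comp]

open Polynomial in
lemma sclP_natDegree (c : ℂ) (hc : c ≠ 0) (q : Polynomial ℂ) :
    (sclP c q).natDegree = q.natDegree := by
  simp [sclP, natDegree_comp, natDegree_C_mul_X _ hc]

lemma prod_coeff_zero (t : Multiset ℂ) :
    ((t.map (fun a => 1 - Polynomial.C a * Polynomial.X)).prod).coeff 0 = 1 := by
  have h0 : ((t.map (fun a => 1 - Polynomial.C a * Polynomial.X)).prod).coeff 0
      = Polynomial.constantCoeff ((t.map (fun a => 1 - Polynomial.C a * Polynomial.X)).prod) := rfl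
  rw [h0, map_multiset_prod, Multiset.map_map]
  have : ∀ a ∈ t, (Polynomial.constantCoeff ∘ fun a => 1 - Polynomial.C a * Polynomial.X) a = 1 := by
    intro a _; simp
  rw [Multiset.map_congr rfl this]
  simp

open Polynomial in
lemma prod_natDegree (t : Multiset ℂ) (ht : ∀ a ∈ t, a ≠ 0) :
    ((t.map (fun a => 1 - Polynomial.C a * Polynomial.X)).prod).natDegree = Multiset.card t := by
  rw [Polynomial.natDegree_multiset_prod]
  · rw [Multiset.map_map]
    have : ∀ a ∈ t, (Polynomial.natDegree ∘ fun a => 1 - Polynomial.C a * Polynomial.X) a = 1 := by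
      intro a ha
      have h1 : (1 : Polynomial ℂ) - Polynomial.C a * Polynomial.X
          = Polynomial.C (-a) * Polynomial.X + Polynomial.C 1 := by
        ring_nf; simp [Polynomial.C_neg]; ring
      simp only [Function.comp_apply, h1]
      exact natDegree_linear (neg_ne_zero.mpr (ht a ha))
    rw [Multiset.map_congr rfl this]
    simp [Multiset.sum_replicate]
  · intro h
    simp only [Multiset.mem_map] at h
    obtain ⟨a, ha, h⟩ := h
    have := congrArg (fun p => Polynomial.coeff p 0) h
    simp at this

lemma PsegP_eq (s : Multiset (ℂ × ℕ)) (i : ℕ) :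
    PsegP s i = (((s.filter (fun q => q.2 = i)).map Prod.fst).map
      (fun a => 1 - Polynomial.C a * Polynomial.X)).prod := by
  rw [PsegP, Multiset.map_map]; rfl

lemma QlastP_eq (v : ℂ) (n : ℕ) (s : Multiset (ℂ × ℕ)) :
    QlastP v n s = (((s.filter (fun q => q.2 = n)).map (fun q => q.1 * v ^ (1 - (n : ℤ)))).map
      (fun a => 1 - Polynomial.C a * Polynomial.X)).prod := by
  rw [QlastP, Multiset.map_map]; rfl

lemma PsegP_coeff_zero (s : Multiset (ℂ × ℕ)) (i : ℕ) : (PsegP s i).coeff 0 = 1 := by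
  rw [PsegP_eq]; exact prod_coeff_zero _

lemma QlastP_coeff_zero (v : ℂ) (n : ℕ) (s : Multiset (ℂ × ℕ)) :
    (QlastP v n s).coeff 0 = 1 := by
  rw [QlastP_eq]; exact prod_coeff_zero _

lemma PsegP_natDegree (s : Multiset (ℂ × ℕ)) (i : ℕ) (h : ∀ q ∈ s, q.1 ≠ 0) :
    (PsegP s i).natDegree = Multiset.card (s.filter (fun q => q.2 = i)) := by
  rw [PsegP_eq, prod_natDegree, Multiset.card_map]
  intro a ha
  simp only [Multiset.mem_map] at ha
  obtain ⟨q, hq, rfl⟩ := ha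
  exact h q (Multiset.mem_of_mem_filter hq)

lemma QlastP_natDegree (v : ℂ) (hv : v ≠ 0) (n : ℕ) (s : Multiset (ℂ × ℕ))
    (h : ∀ q ∈ s, q.1 ≠ 0) :
    (QlastP v n s).natDegree = Multiset.card (s.filter (fun q => q.2 = n)) := by
  rw [QlastP_eq, prod_natDegree, Multiset.card_map]
  intro a ha
  simp only [Multiset.mem_map] at ha
  obtain ⟨q, hq, rfl⟩ := ha
  exact mul_ne_zero (h q (Multiset.mem_of_mem_filter hq)) (zpow_ne_zero _ hv)

lemma dsegMap_coeff_zero (v : ℂ) (n : ℕ) (s : Multiset (ℂ × ℕ)) (i : Fin n) :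
    (dsegMap v n s i).coeff 0 = 1 := by
  have h0 : ∀ p : Polynomial ℂ, p.coeff 0 = Polynomial.constantCoeff p := fun _ => rfl
  rw [dsegMap, h0, map_mul, map_prod]
  have h1 : ∀ k ∈ Finset.Icc ((i : ℕ) + 1) (n - 1),
      Polynomial.constantCoeff (sclP (v ^ ((k : ℤ) - 2 * ((i : ℕ) : ℤ) - 1)) (PsegP s k)) = 1 := by
    intro k _
    rw [← h0, sclP_coeff_zero, PsegP_coeff_zero]
  rw [Finset.prod_congr rfl h1, Finset.prod_const_one, one_mul, ← h0, sclP_coeff_zero,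
    QlastP_coeff_zero]

lemma dsegMap_natDegree (v : ℂ) (hv : v ≠ 0) (n : ℕ) (s : Multiset (ℂ × ℕ))
    (h : ∀ q ∈ s, q.1 ≠ 0) (i : Fin n) :
    (dsegMap v n s i).natDegree =
      (∑ k ∈ Finset.Icc ((i : ℕ) + 1) (n - 1), Multiset.card (s.filter (fun q => q.2 = k)))
        + Multiset.card (s.filter (fun q => q.2 = n)) := by
  rw [dsegMap, Polynomial.natDegree_mul, Polynomial.natDegree_prod]
  · rw [sclP_natDegree _ (zpow_ne_zero _ hv), QlastP_natDegree v hv n s h]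
    congr 1
    apply Finset.sum_congr rfl
    intro k _
    rw [sclP_natDegree _ (zpow_ne_zero _ hv), PsegP_natDegree s k h]
  · intro k _ hzero
    have := sclP_coeff_zero (v ^ ((k : ℤ) - 2 * ((i : ℕ) : ℤ) - 1)) (PsegP s k)
    rw [hzero, PsegP_coeff_zero] at this
    simp at this
  · intro hzero
    rw [Finset.prod_eq_zero_iff] at hzero
    obtain ⟨k, hk, hzk⟩ := hzero
    have := sclP_coeff_zero (v ^ ((k : ℤ) - 2 * ((i : ℕ) : ℤ) - 1)) (PsegP s k)
    rw [hzk, PsegP_coeff_zero] at this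
    simp at this
  · intro hzero
    have := sclP_coeff_zero (v ^ (2 * ((n : ℤ) - (((i : ℕ) : ℤ) + 1)))) (QlastP v n s)
    rw [hzero, QlastP_coeff_zero] at this
    simp at this

lemma key (v : ℂ) (hv : v ≠ 0) (n : ℕ) (s : Multiset (ℂ × ℕ)) (m : ℕ) (hm : m + 1 < n) :
    sclP (v ^ m) (dsegMap v n s ⟨m, by omega⟩) =
      PsegP s (m+1) * sclP (v ^ (m+2)) (dsegMap v n s ⟨m+1, hm⟩) := by
  have hz : ∀ (j : ℕ) (e : ℤ) (q : Polynomial ℂ),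
      sclP (v ^ j) (sclP (v ^ e) q) = sclP (v ^ ((j : ℤ) + e)) q := by
    intro j e q
    rw [sclP_sclP, ← zpow_natCast v j, ← zpow_add₀ hv]
  simp only [dsegMap]
  rw [sclP_mul, sclP_mul, sclP_prod, sclP_prod]
  simp only [hz]
  have hsplit : Finset.Icc (m+1) (n-1) = insert (m+1) (Finset.Icc (m+2) (n-1)) := by
    ext k; simp [Finset.mem_Icc]; omega
  rw [hsplit, Finset.prod_insert (by simp)]
  have e1 : ((m:ℤ) + (((m+1:ℕ):ℤ) - 2 * ((⟨m, by omega⟩ : Fin n) : ℕ) - 1)) = 0 := by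
    push_cast; ring
  rw [mul_assoc]
  refine congrArg₂ (· * ·) ?_ ?_
  · rw [e1, zpow_zero, sclP_one]
  congr 1
  · apply Finset.prod_congr rfl
    intro k hk
    congr 2
    push_cast
    ring
  · congr 2
    push_cast
    ring

lemma sum_card_eq (n : ℕ) (s : Multiset (ℂ × ℕ)) (h : ∀ q ∈ s, q.2 ≤ n) :
    ∑ k ∈ Finset.range (n+1), k * Multiset.card (s.filter (fun q => q.2 = k))
      = (s.map Prod.snd).sum := by
  induction s using Multiset.induction with
  | empty => simp
  | cons q t ih =>
    have hq : q.2 ≤ n := h q (Multiset.mem_cons_self _ _)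
    have ht : ∀ p ∈ t, p.2 ≤ n := fun p hp => h p (Multiset.mem_cons_of_mem hp)
    simp only [Multiset.filter_cons, Multiset.map_cons, Multiset.sum_cons, Multiset.card_add,
      apply_ite Multiset.card, Multiset.card_singleton, Multiset.card_zero, mul_add, mul_ite,
      mul_one, mul_zero]
    rw [Finset.sum_add_distrib, ih ht]
    congr 1
    rw [Finset.sum_ite_eq (Finset.range (n+1)) q.2 (fun k => k)]
    exact if_pos (Finset.mem_range.mpr (by omega))

lemma swap_sum (n : ℕ) (hn : 1 ≤ n) (c : ℕ → ℕ) :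
    ∑ i ∈ Finset.range n, ((∑ k ∈ Finset.Icc (i+1) (n-1), c k) + c n)
      = ∑ k ∈ Finset.range (n+1), k * c k := by
  rw [Finset.sum_add_distrib, Finset.sum_const, Finset.sum_range_succ, Finset.card_range,
    smul_eq_mul]
  congr 1
  have h1 : ∀ i ∈ Finset.range n, (∑ k ∈ Finset.Icc (i+1) (n-1), c k)
      = ∑ k ∈ Finset.range n, if i + 1 ≤ k then c k else 0 := by
    intro i hi
    rw [← Finset.sum_filter]
    congr 1
    ext k
    simp only [Finset.mem_Icc, Finset.mem_filter, Finset.mem_range]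
    omega
  rw [Finset.sum_congr rfl h1, Finset.sum_comm]
  apply Finset.sum_congr rfl
  intro k hk
  have hk' := Finset.mem_range.mp hk
  rw [← Finset.sum_filter]
  have h2 : (Finset.range n).filter (fun i => i + 1 ≤ k) = Finset.range k := by
    ext i
    simp only [Finset.mem_filter, Finset.mem_range]
    omega
  rw [h2, Finset.sum_const, Finset.card_range, smul_eq_mul]

theorem statement3 (v : ℂ) (hv : v ≠ 0) (hroot : ∀ k : ℕ, 0 < k → v ^ k ≠ 1)
    (n r : ℕ) (hn : 1 ≤ n) (hr : 1 ≤ r)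
    (s : Multiset (ℂ × ℕ)) (hs : s ∈ SegSet n r) :
    DominantT v (dsegMap v n s) ∧
      (∀ m : ℕ, m + 1 < n →
        sclP (v ^ m) (extT (dsegMap v n s) m) =
          PsegP s (m + 1) * sclP (v ^ (m + 2)) (extT (dsegMap v n s) (m + 1))) ∧
      dsegMap v n s ∈ QSet v n r := by
  obtain ⟨hmem, hsum⟩ := hs
  have hext : ∀ (m : ℕ) (hm : m < n), extT (dsegMap v n s) m = dsegMap v n s ⟨m, hm⟩ := by
    intro m hm
    rw [extT, dif_pos hm]
  have hkey : ∀ m : ℕ, m + 1 < n →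
      sclP (v ^ m) (extT (dsegMap v n s) m) =
        PsegP s (m + 1) * sclP (v ^ (m + 2)) (extT (dsegMap v n s) (m + 1)) := by
    intro m hm
    rw [hext m (by omega), hext (m+1) hm]
    exact key v hv n s m hm
  have hdom : DominantT v (dsegMap v n s) := by
    refine ⟨fun i => dsegMap_coeff_zero v n s i, fun m hm => ?_⟩
    exact ⟨PsegP s (m+1), by rw [hkey m hm]; ring⟩
  refine ⟨hdom, hkey, hdom, ?_⟩
  have h1 : ∀ i ∈ Finset.range n, (extT (dsegMap v n s) i).natDegree
      = (∑ k ∈ Finset.Icc (i + 1) (n - 1), Multiset.card (s.filter (fun q => q.2 = k)))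
        + Multiset.card (s.filter (fun q => q.2 = n)) := by
    intro i hi
    rw [hext i (Finset.mem_range.mp hi),
      dsegMap_natDegree v hv n s (fun q hq => (hmem q hq).1) ⟨i, Finset.mem_range.mp hi⟩]
  rw [Finset.sum_congr rfl h1, swap_sum n hn _,
    sum_card_eq n s (fun q hq => (hmem q hq).2.2), hsum]

end
end

section
/- Let μ = (μ_1, …, μ_p) be a composition of r. Then, under the canonical identification Ω_{n,ℂ}^{⊗r} = Ω_{n,ℂ}^{⊗μ_1} ⊗ ⋯ ⊗ Ω_{n,ℂ}^{⊗μ_p}, there is an equality of ℂ-subspaces Ω_{n,ℂ}^{⊗r}·𝒥_μ = (Ω_{n,ℂ}^{⊗μ_1}·𝒥_{μ,1}) ⊗ ⋯ ⊗ (Ω_{n,ℂ}^{⊗μ_p}·𝒥_{μ,p}), where Ω_{n,ℂ}^{⊗r}·𝒥_μ denotes the ℂ-span of all vectors w·h with w ∈ Ω_{n,ℂ}^{⊗r} and h ∈ 𝒥_μ, and Ω_{n,ℂ}^{⊗μ_j}·𝒥_{μ,j} denotes the ℂ-span of all w·h with w ∈ Ω_{n,ℂ}^{⊗μ_j} and h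 ∈ 𝒥_{μ,j} acting on the j-th tensor factor. -/
/-!
STATEMENT 7.  Fix `v ∈ ℂ*` not a root of unity, `n, r ≥ 1`, and a composition
`μ = (μ_1,…,μ_p)` of `r`.  Then, under the canonical identification
`Ω_{n,ℂ}^{⊗r} = Ω_{n,ℂ}^{⊗μ_1} ⊗ ⋯ ⊗ Ω_{n,ℂ}^{⊗μ_p}`, one has the equality of `ℂ`-subspaces
`Ω_{n,ℂ}^{⊗r}·𝒥_μ = (Ω_{n,ℂ}^{⊗μ_1}·𝒥_{μ,1}) ⊗ ⋯ ⊗ (Ω_{n,ℂ}^{⊗μ_p}·𝒥_{μ,p})`.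

Formalization choices:
* The tensor space `Ω_{n,ℂ}^{⊗m}` is modelled concretely as the function space
  `(Fin m → Fin n) → ℂ`, whose standard basis `eb 𝐢` corresponds to the basis
  `ω_{i_1} ⊗ ⋯ ⊗ ω_{i_m}` of the `m`-fold tensor power of `Ω_{n,ℂ}`.  Under the canonical
  identification, the pure tensor `g_1 ⊗ ⋯ ⊗ g_p` (with `g_j ∈ Ω_{n,ℂ}^{⊗μ_j}`) corresponds to
  the function `𝐢 ↦ ∏_j g_j (𝐢|_{block j})`; the tensor product of the subspaces `W_j` is the
  span of these pure tensors with `g_j ∈ W_j`.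
* The Iwahori–Hecke algebra `ℋ(r)_ℂ` is encoded as an arbitrary `ℂ`-algebra `H` together with
  elements `T k` (`k = 0,…,r-2`, so `T k` is the generator `T_{k+1}`) satisfying the Hecke
  relations, generating `H`, and with the universal (initial) property among all such; this
  characterizes `ℋ(r)_ℂ` up to isomorphism.
* The right `ℋ(r)_ℂ`-module structure on the tensor space, and the right action of the
  subalgebra `ℋ_{μ,j}` on the `j`-th tensor factor, are encoded by maps `act`/`actB j`
  satisfying the right-module axioms and the defining formulas on basis vectors
  (`0`-based positions: `T k` acts on positions `k, k+1`).
-/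

noncomputable section

/-- The standard basis vector `ω_{i_1} ⊗ ⋯ ⊗ ω_{i_m}` of the tensor space
`Ω_{n,ℂ}^{⊗m} = (Fin m → Fin n) → ℂ`. -/
def eb {m n : ℕ} (i : Fin m → Fin n) : (Fin m → Fin n) → ℂ :=
  fun j => if j = i then 1 else 0

/-- The offset (0-based starting position) of the `j`-th block of the composition `μ`. -/
def off {p : ℕ} (μ : Fin p → ℕ) (j : Fin p) : ℕ :=
  ∑ l ∈ Finset.univ.filter (fun l => l < j), μ l

/-- `inBlock μ j k` says that positions `k, k+1` (0-based) both lie in the `j`-th block of `μ`,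
i.e. that the simple transposition `s_{k+1}` lies in `𝔖_{μ^{(j)}}`. -/
def inBlock {p : ℕ} (μ : Fin p → ℕ) (j : Fin p) (k : ℕ) : Prop :=
  off μ j ≤ k ∧ k + 2 ≤ off μ j + μ j

/-- The `j`-th block of a multi-index `i : Fin r → Fin n` under the canonical identification
`Ω^{⊗r} = Ω^{⊗μ_1} ⊗ ⋯ ⊗ Ω^{⊗μ_p}`. -/
def blockOf {p r n : ℕ} (μ : Fin p → ℕ) (hsum : ∑ j, μ j = r) (i : Fin r → Fin n)
    (j : Fin p) : Fin (μ j) → Fin n :=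
  fun t => i ⟨off μ j + t.1, by
    have ht := t.isLt
    have h1 : off μ j + μ j ≤ ∑ l, μ l := by
      have hj : j ∉ Finset.univ.filter (fun l => l < j) := by simp
      have h2 : ∑ l ∈ insert j (Finset.univ.filter (fun l => l < j)), μ l
          = μ j + off μ j := Finset.sum_insert hj
      have h3 : ∑ l ∈ insert j (Finset.univ.filter (fun l => l < j)), μ l ≤ ∑ l, μ l :=
        Finset.sum_le_sum_of_subset (Finset.subset_univ _)
      omega
    omega⟩

/-- The element `C_k = v⁻¹ T_k − v · 1` of the Hecke algebra (0-based `k`). -/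
def heckeC (v : ℂ) {H : Type} [Ring H] [Algebra ℂ H] (T : ℕ → H) (k : ℕ) : H :=
  v⁻¹ • T k - v • (1 : H)

/-- The subalgebra `ℋ_{μ,j}` of the Hecke algebra, generated by the `T_k` with both positions
`k, k+1` in the `j`-th block of `μ`. -/
def blockAlg {p : ℕ} (μ : Fin p → ℕ) {H : Type} [Ring H] [Algebra ℂ H] (T : ℕ → H)
    (j : Fin p) : Subalgebra ℂ H :=
  Algebra.adjoin ℂ {x : H | ∃ k, inBlock μ j k ∧ x = T k}

/-- The left ideal `𝒥_μ = ⋂_{i : s_i ∈ 𝔖_μ} ℋ(r)_ℂ C_i`. -/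
def bigJ (v : ℂ) {p : ℕ} (μ : Fin p → ℕ) {H : Type} [Ring H] [Algebra ℂ H]
    (T : ℕ → H) : Set H :=
  {x | ∀ k : ℕ, (∃ j, inBlock μ j k) → ∃ h : H, x = h * heckeC v T k}

/-- The left ideal `𝒥_{μ,j} = ⋂_{i : s_i ∈ 𝔖_{μ^{(j)}}} ℋ_{μ,j} C_i` of `ℋ_{μ,j}` (realized as a
subset of `H`; an empty intersection is all of `ℋ_{μ,j}`). -/
def smallJ (v : ℂ) {p : ℕ} (μ : Fin p → ℕ) {H : Type} [Ring H] [Algebra ℂ H]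
    (T : ℕ → H) (j : Fin p) : Set H :=
  {x | x ∈ blockAlg μ T j ∧
    ∀ k : ℕ, inBlock μ j k → ∃ h ∈ blockAlg μ T j, x = h * heckeC v T k}

namespace St7

variable {p r n : ℕ} (μ : Fin p → ℕ)

lemma off_add_le (j : Fin p) : off μ j + μ j ≤ ∑ l, μ l := by
  have hj : j ∉ Finset.univ.filter (fun l => l < j) := by simp
  have h2 : ∑ l ∈ insert j (Finset.univ.filter (fun l => l < j)), μ l
      = μ j + off μ j := Finset.sum_insert hj
  have h3 : ∑ l ∈ insert j (Finset.univ.filter (fun l => l < j)), μ l ≤ ∑ l, μ l :=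
    Finset.sum_le_sum_of_subset (Finset.subset_univ _)
  omega

lemma off_lt_lt {j j' : Fin p} (h : j < j') : off μ j + μ j ≤ off μ j' := by
  have hj : j ∉ Finset.univ.filter (fun l => l < j) := by simp
  have h2 : ∑ l ∈ insert j (Finset.univ.filter (fun l => l < j)), μ l
      = μ j + ∑ l ∈ Finset.univ.filter (fun l => l < j), μ l := Finset.sum_insert hj
  have h3 : insert j (Finset.univ.filter (fun l => l < j)) ⊆
      Finset.univ.filter (fun l => l < j') := by
    intro x hx
    simp only [Finset.mem_insert, Finset.mem_filter, Finset.mem_univ, true_and] at hx ⊢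
    rcases hx with rfl | hx
    · exact h
    · exact lt_trans hx h
  have h4 := Finset.sum_le_sum_of_subset (f := μ) h3
  unfold off
  omega

/-- `Off μ t` : partial sums over natural index. -/
def Off (t : ℕ) : ℕ := ∑ l ∈ Finset.univ.filter (fun l : Fin p => (l : ℕ) < t), μ l

lemma Off_eq_off (j : Fin p) : Off μ (j : ℕ) = off μ j := by
  unfold Off off
  congr 1

lemma Off_zero : Off μ 0 = 0 := by
  unfold Off
  rw [Finset.sum_eq_zero_iff.mpr]
  intro l hl; simp at hl

lemma Off_succ_of_lt {t : ℕ} (ht : t < p) :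
    Off μ (t + 1) = Off μ t + μ ⟨t, ht⟩ := by
  unfold Off
  have : Finset.univ.filter (fun l : Fin p => (l : ℕ) < t + 1)
      = insert ⟨t, ht⟩ (Finset.univ.filter (fun l : Fin p => (l : ℕ) < t)) := by
    ext x
    simp only [Finset.mem_filter, Finset.mem_univ, true_and, Finset.mem_insert]
    constructor
    · intro hx
      rcases Nat.lt_succ_iff_lt_or_eq.mp hx with h | h
      · exact Or.inr h
      · exact Or.inl (Fin.ext h)
    · rintro (rfl | hx)
      · simp
      · omega
  rw [this, Finset.sum_insert (by simp)]
  omega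

lemma Off_succ_of_ge {t : ℕ} (ht : p ≤ t) : Off μ (t + 1) = Off μ t := by
  unfold Off
  congr 1
  ext x
  simp only [Finset.mem_filter, Finset.mem_univ, true_and]
  have := x.isLt
  omega

lemma Off_top : Off μ p = ∑ l, μ l := by
  unfold Off
  congr 1
  ext x
  simp [x.isLt]

lemma block_exists' (s : ℕ) : ∀ t : ℕ, s < Off μ t →
    ∃ j : Fin p, off μ j ≤ s ∧ s < off μ j + μ j := by
  intro t
  induction t with
  | zero => rw [Off_zero]; omega
  | succ t ih =>
    intro hs
    by_cases h : s < Off μ t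
    · exact ih h
    · by_cases hp : t < p
      · have e1 : Off μ t = off μ (⟨t, hp⟩ : Fin p) := Off_eq_off μ ⟨t, hp⟩
        have e2 := Off_succ_of_lt μ hp
        exact ⟨⟨t, hp⟩, by omega, by omega⟩
      · rw [Off_succ_of_ge μ (by omega)] at hs; omega

lemma block_exists (hsum : ∑ l, μ l = r) (s : Fin r) :
    ∃ j : Fin p, off μ j ≤ (s : ℕ) ∧ (s : ℕ) < off μ j + μ j := by
  apply block_exists' μ s p
  rw [Off_top, hsum]
  exact s.isLt

lemma block_unique {j j' : Fin p} {s : ℕ}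
    (h1 : off μ j ≤ s) (h2 : s < off μ j + μ j)
    (h1' : off μ j' ≤ s) (h2' : s < off μ j' + μ j') : j = j' := by
  by_contra hne
  rcases lt_or_gt_of_ne hne with h | h
  · have := off_lt_lt μ h; omega
  · have := off_lt_lt μ h; omega

variable (hsum : ∑ l, μ l = r)

/-- The block containing position `s`. -/
def blockIdx (s : Fin r) : Fin p := (block_exists μ hsum s).choose

lemma blockIdx_spec (s : Fin r) :
    off μ (blockIdx μ hsum s) ≤ (s : ℕ) ∧
    (s : ℕ) < off μ (blockIdx μ hsum s) + μ (blockIdx μ hsum s) :=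
  (block_exists μ hsum s).choose_spec

lemma blockIdx_eq {s : Fin r} {j : Fin p} (h1 : off μ j ≤ (s : ℕ))
    (h2 : (s : ℕ) < off μ j + μ j) : blockIdx μ hsum s = j :=
  block_unique μ (blockIdx_spec μ hsum s).1 (blockIdx_spec μ hsum s).2 h1 h2

lemma pos_lt (hsum : ∑ l, μ l = r) (j : Fin p) (t : Fin (μ j)) :
    off μ j + (t : ℕ) < r := by
  have h1 := off_add_le μ j
  rw [hsum] at h1
  have := t.isLt
  omega

/-- Glue block indices into a global multi-index. -/
def glue (b : ∀ j : Fin p, Fin (μ j) → Fin n) : Fin r → Fin n :=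
  fun s => b (blockIdx μ hsum s)
    ⟨(s : ℕ) - off μ (blockIdx μ hsum s), by
      have := blockIdx_spec μ hsum s; omega⟩

lemma blockOf_apply (i : Fin r → Fin n) (j : Fin p) (t : Fin (μ j)) :
    blockOf μ hsum i j t = i ⟨off μ j + (t : ℕ), pos_lt μ hsum j t⟩ := rfl

lemma apply_heq (b : ∀ j : Fin p, Fin (μ j) → Fin n) :
    ∀ (J j : Fin p), J = j → ∀ (x : Fin (μ J)) (y : Fin (μ j)),
      (x : ℕ) = (y : ℕ) → b J x = b j y := by
  rintro J j rfl x y h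
  congr 1
  exact Fin.ext h

lemma glue_pos (b : ∀ j : Fin p, Fin (μ j) → Fin n) (j : Fin p) (t : Fin (μ j)) :
    glue μ hsum b ⟨off μ j + (t : ℕ), pos_lt μ hsum j t⟩ = b j t := by
  have hj : blockIdx μ hsum ⟨off μ j + (t : ℕ), pos_lt μ hsum j t⟩ = j :=
    blockIdx_eq μ hsum (by simp) (by simpa using by omega)
  exact apply_heq μ b _ _ hj _ _ (by simp only [Fin.val_mk]; rw [hj]; omega)

lemma blockOf_glue (b : ∀ j : Fin p, Fin (μ j) → Fin n) (j : Fin p) :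
    blockOf μ hsum (glue μ hsum b) j = b j := by
  funext t
  rw [blockOf_apply]
  exact glue_pos μ hsum b j t

lemma glue_blockOf (i : Fin r → Fin n) :
    glue μ hsum (fun j => blockOf μ hsum i j) = i := by
  funext s
  unfold glue
  simp only [blockOf_apply]
  congr 1
  have := blockIdx_spec μ hsum s
  apply Fin.ext
  simp only [Fin.val_mk]
  omega

lemma eq_of_blockOf_eq {i i' : Fin r → Fin n}
    (h : ∀ j, blockOf μ hsum i j = blockOf μ hsum i' j) : i = i' := by
  rw [← glue_blockOf μ hsum i, ← glue_blockOf μ hsum i']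
  simp only [h]

end St7
namespace St7

variable {p r n : ℕ} (μ : Fin p → ℕ)

lemma inBlock_lt (hs : ∑ l, μ l = r) {j₀ : Fin p} {k : ℕ} (hk : inBlock μ j₀ k) :
    k + 1 < r := by
  have h1 := off_add_le μ j₀
  rw [hs] at h1
  rcases hk with ⟨hk1, hk2⟩
  omega

lemma pos_ne_k {j j₀ : Fin p} {k : ℕ} (hk : inBlock μ j₀ k) (hne : j ≠ j₀)
    (t : Fin (μ j)) : off μ j + (t : ℕ) ≠ k ∧ off μ j + (t : ℕ) ≠ k + 1 := by
  rcases hk with ⟨hk1, hk2⟩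
  constructor
  · intro h
    exact hne (block_unique μ (s := off μ j + (t : ℕ)) (by omega)
      (by have := t.isLt; omega) (by omega) (by omega))
  · intro h
    exact hne (block_unique μ (s := off μ j + (t : ℕ)) (by omega)
      (by have := t.isLt; omega) (by omega) (by omega))

variable (hsum : ∑ l, μ l = r)

lemma blockOf_swap_ne {j j₀ : Fin p} {k : ℕ} (hk : inBlock μ j₀ k) (hne : j ≠ j₀)
    (hka : k < r) (hkb : k + 1 < r) (i : Fin r → Fin n) :
    blockOf μ hsum (i ∘ Equiv.swap ⟨k, hka⟩ ⟨k + 1, hkb⟩) j = blockOf μ hsum i j := by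
  funext t
  simp only [blockOf_apply, Function.comp_apply]
  congr 1
  apply Equiv.swap_apply_of_ne_of_ne
  · exact fun h => (pos_ne_k μ hk hne t).1 (by simpa using congrArg Fin.val h)
  · exact fun h => (pos_ne_k μ hk hne t).2 (by simpa using congrArg Fin.val h)

lemma blockOf_swap_self {j₀ : Fin p} {k : ℕ} (hk : inBlock μ j₀ k)
    (hka : k < r) (hkb : k + 1 < r)
    (ha : k - off μ j₀ < μ j₀) (hb : k - off μ j₀ + 1 < μ j₀) (i : Fin r → Fin n) :
    blockOf μ hsum (i ∘ Equiv.swap ⟨k, hka⟩ ⟨k + 1, hkb⟩) j₀ =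
      blockOf μ hsum i j₀ ∘ Equiv.swap ⟨k - off μ j₀, ha⟩ ⟨k - off μ j₀ + 1, hb⟩ := by
  rcases hk with ⟨hk1, hk2⟩
  funext t
  simp only [blockOf_apply, Function.comp_apply]
  congr 1
  have ht := t.isLt
  apply Fin.ext
  simp only [Equiv.swap_apply_def, Fin.ext_iff, apply_ite (Fin.val), Fin.val_mk]
  split_ifs <;> omega

end St7
namespace St7

variable {m n : ℕ}

lemma eb_apply (c i : Fin m → Fin n) : eb c i = if i = c then (1:ℂ) else 0 := rfl

lemma ebExpand (x : (Fin m → Fin n) → ℂ) : x = ∑ c : Fin m → Fin n, x c • eb c := by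
  funext i
  rw [Finset.sum_apply, Finset.sum_eq_single i]
  · simp [eb]
  · intro c _ hne
    simp [eb, Ne.symm hne]
  · simp

variable (v : ℂ) (a b : Fin m)

lemma comp_swap_comp_swap (i : Fin m → Fin n) :
    (i ∘ Equiv.swap a b) ∘ Equiv.swap a b = i := by
  funext x
  simp [Equiv.swap_apply_self]

lemma comp_swap_a (i : Fin m → Fin n) : (i ∘ Equiv.swap a b) a = i b := by simp

lemma comp_swap_b (i : Fin m → Fin n) : (i ∘ Equiv.swap a b) b = i a := by simp

lemma comp_swap_eq_iff {i c : Fin m → Fin n} :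
    i ∘ Equiv.swap a b = c ↔ i = c ∘ Equiv.swap a b := by
  constructor
  · rintro rfl
    rw [comp_swap_comp_swap]
  · rintro rfl
    rw [comp_swap_comp_swap]

lemma comp_swap_self {i : Fin m → Fin n} (h : i a = i b) : i ∘ Equiv.swap a b = i := by
  funext x
  rcases Equiv.swap_apply_def a b x with _
  simp only [Function.comp_apply, Equiv.swap_apply_def]
  split_ifs with h1 h2
  · subst h1; exact h.symm
  · subst h2; exact h
  · rfl

lemma comp_swap_ne {i : Fin m → Fin n} (hab : a ≠ b) (h : i a ≠ i b) :
    i ∘ Equiv.swap a b ≠ i := by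
  intro he
  apply h
  have := congrFun he a
  rw [comp_swap_a] at this
  exact this.symm

/-- The "q-antisymmetry" conditions cutting out `Ω · C` at the pair of positions `(a,b)`. -/
def KcondP (x : (Fin m → Fin n) → ℂ) : Prop :=
  ∀ i : Fin m → Fin n,
    (i a = i b → x i = 0) ∧
    (i a < i b → x i + v * x (i ∘ Equiv.swap a b) = 0)

section Eval

variable (E : ((Fin m → Fin n) → ℂ) → ((Fin m → Fin n) → ℂ))
  (hadd : ∀ x y, E (x + y) = E x + E y)
  (hsmul : ∀ (c : ℂ) x, E (c • x) = c • E x)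
  (hbasis : ∀ c : Fin m → Fin n,
    E (eb c) = if c a = c b then (v ^ 2 : ℂ) • eb c
      else if c a < c b then v • eb (c ∘ Equiv.swap a b)
      else v • eb (c ∘ Equiv.swap a b) + (v ^ 2 - 1 : ℂ) • eb c)

include hadd hsmul hbasis

lemma GEval (hab : a ≠ b) (x : (Fin m → Fin n) → ℂ) (i : Fin m → Fin n) :
    E x i = if i a = i b then v ^ 2 * x i
      else if i a < i b then v * x (i ∘ Equiv.swap a b)
      else v * x (i ∘ Equiv.swap a b) + (v ^ 2 - 1) * x i := by
  let L : ((Fin m → Fin n) → ℂ) →ₗ[ℂ] ((Fin m → Fin n) → ℂ) :=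
    { toFun := E, map_add' := hadd, map_smul' := hsmul }
  have hE0 : E x = ∑ c : Fin m → Fin n, x c • E (eb c) := by
    show L x = ∑ c : Fin m → Fin n, x c • L (eb c)
    conv_lhs => rw [ebExpand x]
    rw [map_sum]
    simp [L]
  rw [hE0, Finset.sum_apply]
  simp only [Pi.smul_apply, smul_eq_mul]
  have hterm : ∀ c : Fin m → Fin n, (E (eb c)) i =
      (if c a = c b then (if i = c then v ^ 2 else 0)
       else if c a < c b then (if i = c ∘ Equiv.swap a b then v else 0)
       else (if i = c ∘ Equiv.swap a b then v else 0) + (if i = c then v ^ 2 - 1 else 0)) := by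
    intro c
    rw [hbasis c]
    split_ifs with h1 h2 <;>
      simp only [Pi.smul_apply, Pi.add_apply, eb_apply, smul_eq_mul] <;>
      split_ifs <;> ring
  simp only [hterm]
  by_cases h1 : i a = i b
  · rw [if_pos h1]
    have hsw : i ∘ Equiv.swap a b = i := comp_swap_self a b h1
    rw [Finset.sum_eq_single i]
    · rw [if_pos h1, if_pos rfl]; ring
    · intro c _ hc
      have hne1 : ¬ (i = c) := fun g => hc g.symm
      have hne2 : ¬ (i = c ∘ Equiv.swap a b) := by
        intro g
        apply hc
        have := (comp_swap_eq_iff a b).mpr g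
        rw [hsw] at this
        exact this.symm
      split_ifs <;>
        first
        | ring
        | exact absurd (by assumption) hne1
        | exact absurd (by assumption) hne2
    · simp
  · rw [if_neg h1]
    have hswne : i ∘ Equiv.swap a b ≠ i := comp_swap_ne a b hab h1
    have hia : (i ∘ Equiv.swap a b) a = i b := comp_swap_a a b i
    have hib : (i ∘ Equiv.swap a b) b = i a := comp_swap_b a b i
    have key : ∀ c : Fin m → Fin n, c ≠ i → c ≠ i ∘ Equiv.swap a b →
        (x c * (if c a = c b then (if i = c then v ^ 2 else 0)
       else if c a < c b then (if i = c ∘ Equiv.swap a b then v else 0)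
       else (if i = c ∘ Equiv.swap a b then v else 0) + (if i = c then v ^ 2 - 1 else 0))) = 0 := by
      intro c hc1 hc2
      have hne1 : ¬ (i = c) := fun g => hc1 g.symm
      have hne2 : ¬ (i = c ∘ Equiv.swap a b) := by
        intro g
        exact hc2 ((comp_swap_eq_iff a b).mpr g).symm
      split_ifs <;>
        first
        | ring
        | exact absurd (by assumption) hne1
        | exact absurd (by assumption) hne2
    by_cases h2 : i a < i b
    · rw [if_pos h2]
      rw [Finset.sum_eq_single (i ∘ Equiv.swap a b)]
      · rw [if_neg (by rw [hia, hib]; exact fun g => h1 g.symm)]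
        rw [if_neg (by rw [hia, hib]; exact fun g => absurd h2 (not_lt_of_gt g))]
        rw [if_pos ((comp_swap_comp_swap a b i).symm),
          if_neg (fun g : i = i ∘ Equiv.swap a b => hswne g.symm)]
        ring
      · intro c _ hc
        by_cases hci : c = i
        · subst hci
          rw [if_neg h1, if_pos h2, if_neg (fun g : c = c ∘ Equiv.swap a b =>
            hswne g.symm)]
          ring
        · exact key c hci hc
      · simp
    · rw [if_neg h2]
      have hisw_inc : (i ∘ Equiv.swap a b) a < (i ∘ Equiv.swap a b) b := by
        rw [hia, hib]
        rcases lt_trichotomy (i a) (i b) with h | h | h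
        · exact absurd h h2
        · exact absurd h h1
        · exact h
      rw [← Finset.sum_subset (Finset.subset_univ {i ∘ Equiv.swap a b, i})]
      · rw [Finset.sum_pair hswne]
        rw [if_neg (ne_of_lt hisw_inc), if_pos hisw_inc,
          if_pos (by rw [comp_swap_comp_swap]), if_neg h1, if_neg h2,
          if_neg (fun g : i = i ∘ Equiv.swap a b => hswne g.symm), if_pos rfl]
        ring
      · intro c _ hc
        simp only [Finset.mem_insert, Finset.mem_singleton, not_or] at hc
        exact key c hc.2 hc.1

lemma KcondP_eigen (hab : a ≠ b) (x : (Fin m → Fin n) → ℂ)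
    (hx : KcondP v a b x) : E x = -x := by
  funext i
  rw [GEval v a b E hadd hsmul hbasis hab x i]
  by_cases h1 : i a = i b
  · rw [if_pos h1]
    simp [(hx i).1 h1]
  · rw [if_neg h1]
    by_cases h2 : i a < i b
    · rw [if_pos h2]
      have := (hx i).2 h2
      simp only [Pi.neg_apply]
      linear_combination this
    · rw [if_neg h2]
      have hinc : (i ∘ Equiv.swap a b) a < (i ∘ Equiv.swap a b) b := by
        rw [comp_swap_a, comp_swap_b]
        rcases lt_trichotomy (i a) (i b) with h | h | h
        · exact absurd h h2
        · exact absurd h h1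
        · exact h
      have hrel := (hx (i ∘ Equiv.swap a b)).2 hinc
      rw [comp_swap_comp_swap] at hrel
      simp only [Pi.neg_apply]
      linear_combination v * hrel

lemma KcondP_CE (hv : v ≠ 0) (hab : a ≠ b) (x : (Fin m → Fin n) → ℂ) :
    KcondP v a b (v⁻¹ • E x - v • x) := by
  intro i
  have hE := GEval v a b E hadd hsmul hbasis hab x
  constructor
  · intro h
    simp only [Pi.sub_apply, Pi.smul_apply, smul_eq_mul]
    rw [hE i, if_pos h]
    field_simp
    ring
  · intro h
    simp only [Pi.sub_apply, Pi.smul_apply, smul_eq_mul]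
    rw [hE i, hE (i ∘ Equiv.swap a b), if_neg (fun g : i a = i b => (ne_of_lt h) g),
      if_pos h]
    simp only [comp_swap_a, comp_swap_b, comp_swap_comp_swap]
    rw [if_neg (fun g : i b = i a => (ne_of_lt h) g.symm), if_neg (lt_asymm h)]
    field_simp
    ring

end Eval

end St7
namespace St7

variable {H : Type} [Ring H] [Algebra ℂ H]

/-- Descending monomial `T a * T (a-1) * ⋯ * T (a-s+1)`. -/
def Dmon (T : ℕ → H) (a : ℕ) : ℕ → H
  | 0 => 1
  | s+1 => Dmon T a s * T (a - s)

variable (v : ℂ) (T : ℕ → H) (r : ℕ)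

lemma Dmon_zero (a : ℕ) : Dmon T a 0 = 1 := rfl

lemma Dmon_succ (a s : ℕ) : Dmon T a (s + 1) = Dmon T a s * T (a - s) := rfl

section Rels

variable
  (hquad : ∀ k : ℕ, k + 1 < r → (T k + 1) * (T k - algebraMap ℂ H (v ^ 2)) = 0)
  (hbraid : ∀ k : ℕ, k + 2 < r → T k * T (k + 1) * T k = T (k + 1) * T k * T (k + 1))
  (hcomm : ∀ k l : ℕ, k + 1 < r → l + 1 < r → k + 1 < l → T k * T l = T l * T k)

include hquad in
lemma Tsq (k : ℕ) (hk : k + 1 < r) :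
    T k * T k = ((v ^ 2 - 1 : ℂ)) • T k + (v ^ 2 : ℂ) • (1 : H) := by
  have h := hquad k hk
  rw [add_mul, mul_sub, mul_sub, one_mul] at h
  rw [Algebra.algebraMap_eq_smul_one, mul_smul_comm, mul_one] at h
  simp only [one_mul] at h
  have h2 : T k * T k - (((v ^ 2 - 1 : ℂ)) • T k + (v ^ 2 : ℂ) • (1 : H)) = 0 := by
    rw [← h, sub_smul, one_smul]
    abel
  exact sub_eq_zero.mp h2

lemma Dmon_split (a x y : ℕ) : Dmon T a (x + y) = Dmon T a x * Dmon T (a - x) y := by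
  induction y with
  | zero => simp [Dmon]
  | succ y ih =>
    rw [show x + (y+1) = (x+y)+1 by ring, Dmon_succ, ih, Dmon_succ, Nat.sub_sub,
      mul_assoc]

include hcomm in
/-- `T k` commutes with `Dmon T a s` if `k` is below all factors. -/
lemma Dmon_comm_lo (a s k : ℕ) (ha : a + 1 < r) (h : k + s + 1 ≤ a) :
    T k * Dmon T a s = Dmon T a s * T k := by
  induction s with
  | zero => simp [Dmon]
  | succ s ih =>
    rw [Dmon_succ, ← mul_assoc, ih (by omega), mul_assoc, mul_assoc]
    congr 1
    exact hcomm k (a - s) (by omega) (by omega) (by omega)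

include hcomm in
/-- `T k` commutes with `Dmon T a s` if `k` is at least 2 above all factors. -/
lemma Dmon_comm_hi (a s k : ℕ) (ha : a + 2 ≤ k) (hk : k + 1 < r) :
    T k * Dmon T a s = Dmon T a s * T k := by
  induction s with
  | zero => simp [Dmon]
  | succ s ih =>
    rw [Dmon_succ, ← mul_assoc, ih, mul_assoc, mul_assoc]
    congr 1
    exact (hcomm (a - s) k (by omega) hk (by omega)).symm

include hquad in
lemma Dmon_R3 (a s : ℕ) (ha : a + 1 < r) (hs : s ≤ a) :
    Dmon T a (s + 1) * T (a - s) =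
      ((v ^ 2 - 1 : ℂ)) • Dmon T a (s + 1) + (v ^ 2 : ℂ) • Dmon T a s := by
  rw [Dmon_succ, mul_assoc, Tsq v T r hquad (a - s) (by omega), mul_add,
    mul_smul_comm, mul_smul_comm, mul_one, ← Dmon_succ]

include hbraid hcomm in
lemma Dmon_R4 (a k y : ℕ) (ha : a + 1 < r) (hk1 : 1 ≤ k) (hk2 : k ≤ a)
    (hy : (a - k) + 2 + y ≤ a + 1) :
    Dmon T a ((a - k) + 2 + y) * T k = T (k - 1) * Dmon T a ((a - k) + 2 + y) := by
  obtain ⟨b, rfl⟩ : ∃ b, k = b + 1 := ⟨k - 1, by omega⟩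
  have hkr : b + 2 < r := by omega
  set u := a - (b + 1) with hu
  have hyb : y ≤ b := by omega
  simp only [Nat.add_sub_cancel]
  have h1 : Dmon T a (u + 2 + y) = Dmon T a (u + 1) * Dmon T b (y + 1) := by
    rw [show u + 2 + y = (u + 1) + (y + 1) by ring, Dmon_split,
      show a - (u + 1) = b by omega]
  have h2 : Dmon T b (y + 1) = T b * Dmon T (b - 1) y := by
    rw [show y + 1 = 1 + y by ring, Dmon_split, show b - 1 = b - 1 from rfl]
    simp [Dmon]
  have h3 : Dmon T a (u + 1) = Dmon T a u * T (b + 1) := by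
    rw [Dmon_succ, show a - u = b + 1 by omega]
  have hcomm1 : Dmon T (b - 1) y * T (b + 1) = T (b + 1) * Dmon T (b - 1) y := by
    rcases Nat.eq_zero_or_pos y with rfl | hy'
    · simp [Dmon]
    · exact (Dmon_comm_hi T r hcomm (b - 1) y (b + 1) (by omega) (by omega)).symm
  have hcommb : T b * Dmon T a u = Dmon T a u * T b :=
    Dmon_comm_lo T r hcomm a u b ha (by omega)
  have hb2 : T b * (T (b + 1) * (T b * Dmon T (b - 1) y))
      = T (b + 1) * (T b * (T (b + 1) * Dmon T (b - 1) y)) := by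
    simp only [← mul_assoc]
    rw [hbraid b hkr]
  rw [h1, h2, h3]
  simp only [mul_assoc]
  rw [hcomm1, ← hb2, ← mul_assoc, ← hcommb, mul_assoc]

end Rels

end St7
namespace St7

variable {H : Type} [Ring H] [Algebra ℂ H]

/-- coefficient `(-(v²)⁻¹)^s` -/
def cf (v : ℂ) (s : ℕ) : ℂ := (-(v ^ 2)⁻¹) ^ s

/-- `Z_t` : sum of distinguished coset representatives with sign-coefficients. -/
def Zel (v : ℂ) (T : ℕ → H) (o t : ℕ) : H :=
  ∑ s ∈ Finset.range (t + 1), cf v s • Dmon T (o + t - 1) s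

/-- `Y_m` : the q-antisymmetrizer for the block `[o, o+m)`. -/
def Yel (v : ℂ) (T : ℕ → H) (o : ℕ) : ℕ → H
  | 0 => 1
  | t+1 => Yel v T o t * Zel v T o t

lemma Yel_succ (v : ℂ) (T : ℕ → H) (o t : ℕ) :
    Yel v T o (t + 1) = Yel v T o t * Zel v T o t := rfl

variable (v : ℂ) (T : ℕ → H) (r : ℕ)

section Rels

variable (hv : v ≠ 0)
  (hquad : ∀ k : ℕ, k + 1 < r → (T k + 1) * (T k - algebraMap ℂ H (v ^ 2)) = 0)
  (hbraid : ∀ k : ℕ, k + 2 < r → T k * T (k + 1) * T k = T (k + 1) * T k * T (k + 1))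
  (hcomm : ∀ k l : ℕ, k + 1 < r → l + 1 < r → k + 1 < l → T k * T l = T l * T k)

include hv hquad hbraid hcomm in
lemma Zel_Tk (o t k : ℕ) (ht : 1 ≤ t) (hk1 : o ≤ k) (hk2 : k < o + t)
    (hr2 : o + t < r) :
    ∃ A B : H,
      Zel v T o t * T k + Zel v T o t = (T k + 1) * A + (T (k - 1) + 1) * B ∧
      (o + t - 1 ≤ k → A = 0) ∧ (k ≤ o → B = 0) := by
  set a := o + t - 1 with ha
  have har : a + 1 < r := by omega
  set u := a - k with hu
  have hut : u ≤ t - 1 := by omega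
  refine ⟨∑ s ∈ Finset.range u, cf v s • Dmon T a s,
    ∑ s ∈ Finset.Ico (u + 2) (t + 1), cf v s • Dmon T a s, ?_, ?_, ?_⟩
  · -- main identity
    set f : ℕ → H := fun s => cf v s • (Dmon T a s * T k) + cf v s • Dmon T a s with hf
    have hLHS : Zel v T o t * T k + Zel v T o t = ∑ s ∈ Finset.range (t + 1), f s := by
      rw [Zel, Finset.sum_mul, ← Finset.sum_add_distrib]
      apply Finset.sum_congr rfl
      intro s _
      rw [smul_mul_assoc]
    rw [hLHS]
    have hsplit : ∑ s ∈ Finset.range (t + 1), f s =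
        (∑ s ∈ Finset.range u, f s) + (f u + f (u + 1)
          + ∑ s ∈ Finset.Ico (u + 2) (t + 1), f s) := by
      rw [Finset.range_eq_Ico,
        ← Finset.sum_Ico_consecutive f (Nat.zero_le u) (by omega : u ≤ t + 1),
        Finset.sum_eq_sum_Ico_succ_bot (by omega : u < t + 1) f,
        Finset.sum_eq_sum_Ico_succ_bot (by omega : u + 1 < t + 1) f]
      simp only [show u + 1 + 1 = u + 2 from rfl, ← Finset.range_eq_Ico]
      abel
    rw [hsplit]
    have hP1 : ∑ s ∈ Finset.range u, f s =
        (T k + 1) * ∑ s ∈ Finset.range u, cf v s • Dmon T a s := by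
      rw [Finset.mul_sum]
      apply Finset.sum_congr rfl
      intro s hs
      rw [Finset.mem_range] at hs
      rw [hf]
      have hcl : T k * Dmon T a s = Dmon T a s * T k :=
        Dmon_comm_lo T r hcomm a s k har (by omega)
      rw [add_mul, one_mul, mul_smul_comm, hcl]
    have hPmid : f u + f (u + 1) = 0 := by
      have e2 : Dmon T a u * T k = Dmon T a (u + 1) := by
        rw [Dmon_succ, show a - u = k by omega]
      have e3 : Dmon T a (u + 1) * T k =
          ((v ^ 2 - 1 : ℂ)) • Dmon T a (u + 1) + (v ^ 2 : ℂ) • Dmon T a u := by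
        have h3 := Dmon_R3 v T r hquad a u har (by omega)
        rw [show a - u = k by omega] at h3
        exact h3
      have hs0 : cf v u + cf v (u + 1) * v ^ 2 = 0 := by
        rw [cf, cf, pow_succ]
        have hv2 : (v : ℂ) ^ 2 ≠ 0 := pow_ne_zero 2 hv
        field_simp
        rw [pow_succ (-(1 / v ^ 2)) u, mul_comm ((-(1 / v ^ 2)) ^ u), ← mul_assoc,
          show v ^ 2 * (-(1 / v ^ 2)) = -1 by field_simp]
        ring
      have key : f u + f (u + 1) =
          (cf v u + cf v (u + 1) * v ^ 2) • Dmon T a (u + 1)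
            + (cf v u + cf v (u + 1) * v ^ 2) • Dmon T a u := by
        rw [hf]
        simp only [e2, e3]
        module
      rw [key, hs0, zero_smul, zero_smul, add_zero]
    have hP3 : ∑ s ∈ Finset.Ico (u + 2) (t + 1), f s =
        (T (k - 1) + 1) * ∑ s ∈ Finset.Ico (u + 2) (t + 1), cf v s • Dmon T a s := by
      rw [Finset.mul_sum]
      apply Finset.sum_congr rfl
      intro s hs
      rw [Finset.mem_Ico] at hs
      obtain ⟨y, rfl⟩ : ∃ y, s = u + 2 + y := ⟨s - (u + 2), by omega⟩
      have hR4 : Dmon T a (u + 2 + y) * T k = T (k - 1) * Dmon T a (u + 2 + y) := by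
        have := Dmon_R4 T r hbraid hcomm a k y har (by omega) (by omega) (by omega)
        rwa [show a - k = u from rfl] at this
      simp only [hf]
      rw [hR4, add_mul, one_mul, mul_smul_comm]
    rw [hP1, hPmid, hP3, zero_add]
  · intro h
    rw [show u = 0 by omega, Finset.range_zero, Finset.sum_empty]
  · intro h
    rw [show u = t - 1 by omega]
    rw [show t - 1 + 2 = t + 1 by omega, Finset.Ico_self, Finset.sum_empty]

include hv hquad hbraid hcomm in
lemma Yel_Tk (o m : ℕ) (hom : o + m ≤ r) :
    ∀ t, t + 1 ≤ m → ∀ k, o ≤ k → k < o + t →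
      Yel v T o (t + 1) * T k = - Yel v T o (t + 1) := by
  intro t
  induction t with
  | zero => intro _ k hk1 hk2; omega
  | succ t ih =>
    intro htm k hk1 hk2
    obtain ⟨A, B, heq, hA, hB⟩ :=
      Zel_Tk v T r hv hquad hbraid hcomm o (t + 1) k (by omega) hk1 (by omega)
        (by omega)
    have hz : Zel v T o (t + 1) * T k =
        (T k + 1) * A + (T (k - 1) + 1) * B - Zel v T o (t + 1) :=
      eq_sub_of_add_eq heq
    have hA0 : Yel v T o (t + 1) * ((T k + 1) * A) = 0 := by
      by_cases hc : k < o + t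
      · rw [← mul_assoc, mul_add, mul_one, ih (by omega) k hk1 hc,
          neg_add_cancel, zero_mul]
      · rw [hA (by omega)]
        simp
    have hB0 : Yel v T o (t + 1) * ((T (k - 1) + 1) * B) = 0 := by
      by_cases hc : o < k
      · rw [← mul_assoc, mul_add, mul_one, ih (by omega) (k - 1) (by omega) (by omega),
          neg_add_cancel, zero_mul]
      · rw [hB (by omega)]
        simp
    rw [Yel_succ v T o (t + 1), mul_assoc, hz, mul_sub, mul_add, hA0, hB0,
      zero_add, zero_sub, ← Yel_succ]

end Rels

end St7
namespace St7

variable {H : Type} [Ring H] [Algebra ℂ H]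

def eScal (v : ℂ) (t : ℕ) : ℂ := ∑ s ∈ Finset.range (t + 1), ((v ^ 2)⁻¹) ^ s

def cScal (v : ℂ) (m : ℕ) : ℂ := ∏ t ∈ Finset.range m, eScal v t

variable (v : ℂ) (T : ℕ → H) (r : ℕ)

section Mem

variable (S : Subalgebra ℂ H)

lemma Dmon_mem (a s : ℕ) (h : ∀ j', j' < s → T (a - j') ∈ S) : Dmon T a s ∈ S := by
  induction s with
  | zero => exact one_mem S
  | succ s ih =>
    rw [Dmon_succ]
    exact mul_mem (ih fun j' hj' => h j' (by omega)) (h s (by omega))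

lemma Zel_mem (o t : ℕ) (h : ∀ k, o ≤ k → k + 2 ≤ o + t + 1 → T k ∈ S) :
    Zel v T o t ∈ S := by
  apply Subalgebra.sum_mem
  intro s hs
  rw [Finset.mem_range] at hs
  apply Subalgebra.smul_mem
  apply Dmon_mem
  intro j' hj'
  exact h (o + t - 1 - j') (by omega) (by omega)

lemma Yel_mem (o m : ℕ) (h : ∀ k, o ≤ k → k + 2 ≤ o + m → T k ∈ S) :
    ∀ t, t ≤ m → Yel v T o t ∈ S := by
  intro t
  induction t with
  | zero => exact fun _ => one_mem S
  | succ t ih =>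
    intro htm
    rw [Yel_succ]
    exact mul_mem (ih (by omega))
      (Zel_mem v T S o t (fun k hk1 hk2 => h k hk1 (by omega)))

end Mem

section Action

variable {M : Type} [AddCommGroup M] [Module ℂ M] (A : M → H → M)
  (hAsm : ∀ (c : ℂ) (x : M) h, A (c • x) h = c • A x h)
  (hA1 : ∀ x, A x 1 = x)
  (hAmul : ∀ x h h', A x (h * h') = A (A x h) h')
  (hAadd : ∀ x h h', A x (h + h') = A x h + A x h')
  (hAsmh : ∀ x (c : ℂ) h, A x (c • h) = c • A x h)

include hAsm hA1 hAmul in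
lemma A_Dmon (o t : ℕ) (x : M)
    (hx : ∀ k, o ≤ k → k + 2 ≤ o + t + 1 → A x (T k) = -x) :
    ∀ s, s ≤ t → A x (Dmon T (o + t - 1) s) = ((-1 : ℂ)) ^ s • x := by
  intro s
  induction s with
  | zero => intro _; rw [Dmon_zero, hA1, pow_zero, one_smul]
  | succ s ih =>
    intro hst
    rw [Dmon_succ, hAmul, ih (by omega), hAsm,
      hx (o + t - 1 - s) (by omega) (by omega)]
    module

include hAsm hA1 hAmul hAadd hAsmh in
lemma A_Zel (o t : ℕ) (x : M)
    (hx : ∀ k, o ≤ k → k + 2 ≤ o + t + 1 → A x (T k) = -x) :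
    A x (Zel v T o t) = eScal v t • x := by
  let L : H →ₗ[ℂ] M :=
    { toFun := fun h => A x h
      map_add' := hAadd x
      map_smul' := hAsmh x }
  have : A x (Zel v T o t) = ∑ s ∈ Finset.range (t + 1), cf v s • A x (Dmon T (o + t - 1) s) := by
    show L (Zel v T o t) = _
    rw [Zel, map_sum]
    simp [L]
  rw [this]
  rw [eScal, Finset.sum_smul]
  apply Finset.sum_congr rfl
  intro s hs
  rw [Finset.mem_range] at hs
  rw [A_Dmon T A hAsm hA1 hAmul o t x hx s (by omega), smul_smul, cf]
  congr 1
  rw [neg_pow, inv_pow, mul_comm, ← mul_assoc, ← mul_pow]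
  simp

include hAsm hA1 hAmul hAadd hAsmh in
lemma A_Yel (o m : ℕ) (x : M)
    (hx : ∀ k, o ≤ k → k + 2 ≤ o + m → A x (T k) = -x) :
    ∀ t, t ≤ m → A x (Yel v T o t) = cScal v t • x := by
  intro t
  induction t with
  | zero => intro _; rw [cScal, Finset.range_zero, Finset.prod_empty, one_smul]; exact hA1 x
  | succ t ih =>
    intro htm
    rw [Yel_succ, hAmul, ih (by omega), hAsm,
      A_Zel v T A hAsm hA1 hAmul hAadd hAsmh o t x
        (fun k h1 h2 => hx k h1 (by omega)),
      smul_smul, cScal, cScal, Finset.prod_range_succ]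

end Action

section Scal

variable (hv : v ≠ 0) (hroot : ∀ k : ℕ, 0 < k → v ^ k ≠ 1)

include hv hroot in
lemma eScal_ne (t : ℕ) : eScal v t ≠ 0 := by
  intro h0
  have hg := geom_sum_mul ((v ^ 2)⁻¹) (t + 1)
  rw [show ∑ i ∈ Finset.range (t + 1), ((v ^ 2)⁻¹) ^ i = eScal v t from rfl, h0,
    zero_mul] at hg
  have h1 : ((v ^ 2)⁻¹) ^ (t + 1) = 1 := by
    have := hg.symm
    rwa [sub_eq_zero] at this
  have h2 : (v ^ (2 * (t + 1))) = 1 := by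
    rw [inv_pow] at h1
    have := inv_eq_one.mp h1
    rwa [← pow_mul] at this
  exact hroot (2 * (t + 1)) (by omega) h2

include hv hroot in
lemma cScal_ne (m : ℕ) : cScal v m ≠ 0 := by
  rw [cScal]
  exact Finset.prod_ne_zero_iff.mpr fun t _ => eScal_ne v hv hroot t

include hv hroot in
lemma negvv_ne : -(v⁻¹ + v) ≠ 0 := by
  intro h
  apply hroot 4 (by omega)
  have h2 : v⁻¹ + v = 0 := neg_eq_zero.mp h
  have h3 : 1 + v ^ 2 = 0 := by
    have h4 := congrArg (fun z => v * z) h2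
    simp only [mul_add, mul_zero] at h4
    rw [mul_inv_cancel₀ hv] at h4
    linear_combination h4
  have h5 : v ^ 2 = -1 := by linear_combination h3
  calc v ^ 4 = (v ^ 2) ^ 2 := by ring
  _ = 1 := by rw [h5]; norm_num

end Scal

lemma commute_adjoin {z : H} {S : Set H} (hS : ∀ y ∈ S, Commute z y) {x : H}
    (hx : x ∈ Algebra.adjoin ℂ S) : Commute z x := by
  induction hx using Algebra.adjoin_induction with
  | mem y hy => exact hS y hy
  | algebraMap c => exact (Algebra.commutes c z).symm
  | add x y _ _ hx hy => exact hx.add_right hy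
  | mul x y _ _ hx hy => exact hx.mul_right hy

end St7
namespace St7

variable {p r n : ℕ} (μ : Fin p → ℕ) (hsum : ∑ l, μ l = r)

/-- The pure-tensor gluing map: `(g_1, …, g_p) ↦ g_1 ⊗ ⋯ ⊗ g_p`. -/
def membed (g : ∀ j : Fin p, (Fin (μ j) → Fin n) → ℂ) : (Fin r → Fin n) → ℂ :=
  fun i => ∏ j, g j (blockOf μ hsum i j)

lemma membed_update_apply (g : ∀ j : Fin p, (Fin (μ j) → Fin n) → ℂ) (j₀ : Fin p)
    (y : (Fin (μ j₀) → Fin n) → ℂ) (i : Fin r → Fin n) :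
    membed μ hsum (Function.update g j₀ y) i =
      y (blockOf μ hsum i j₀) * ∏ j ∈ Finset.univ.erase j₀, g j (blockOf μ hsum i j) := by
  have h1 : (fun j => Function.update g j₀ y j (blockOf μ hsum i j)) =
      Function.update (fun j => g j (blockOf μ hsum i j)) j₀ (y (blockOf μ hsum i j₀)) := by
    funext j
    by_cases hj : j = j₀
    · subst hj; simp
    · simp [Function.update_of_ne hj]
  show ∏ j, Function.update g j₀ y j (blockOf μ hsum i j) = _
  rw [h1, Finset.prod_update_of_mem (Finset.mem_univ j₀), ← Finset.erase_eq]

lemma membed_factor (g : ∀ j : Fin p, (Fin (μ j) → Fin n) → ℂ) (j₀ : Fin p)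
    (i : Fin r → Fin n) :
    membed μ hsum g i =
      g j₀ (blockOf μ hsum i j₀) * ∏ j ∈ Finset.univ.erase j₀, g j (blockOf μ hsum i j) :=
  (Finset.mul_prod_erase Finset.univ _ (Finset.mem_univ j₀)).symm

lemma membed_update_add (g : ∀ j : Fin p, (Fin (μ j) → Fin n) → ℂ) (j₀ : Fin p)
    (y y' : (Fin (μ j₀) → Fin n) → ℂ) :
    membed μ hsum (Function.update g j₀ (y + y')) =
      membed μ hsum (Function.update g j₀ y) + membed μ hsum (Function.update g j₀ y') := by
  funext i
  simp only [Pi.add_apply, membed_update_apply]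
  ring

lemma membed_update_smul (g : ∀ j : Fin p, (Fin (μ j) → Fin n) → ℂ) (j₀ : Fin p)
    (c : ℂ) (y : (Fin (μ j₀) → Fin n) → ℂ) :
    membed μ hsum (Function.update g j₀ (c • y)) =
      c • membed μ hsum (Function.update g j₀ y) := by
  funext i
  simp only [Pi.smul_apply, smul_eq_mul, membed_update_apply]
  ring

lemma eb_blocks (b : ∀ j : Fin p, Fin (μ j) → Fin n) :
    membed μ hsum (fun j => eb (b j)) = eb (glue μ hsum b) := by
  funext i
  by_cases hall : ∀ j, blockOf μ hsum i j = b j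
  · have hi : i = glue μ hsum b :=
      eq_of_blockOf_eq μ hsum (fun j => by rw [hall j, blockOf_glue])
    rw [eb_apply, if_pos hi]
    apply Finset.prod_eq_one
    intro j _
    show eb (b j) (blockOf μ hsum i j) = 1
    rw [eb_apply, if_pos (hall j)]
  · push_neg at hall
    obtain ⟨j0, hj0⟩ := hall
    rw [eb_apply, if_neg (fun he => hj0 (by rw [he, blockOf_glue]))]
    apply Finset.prod_eq_zero (Finset.mem_univ j0)
    show eb (b j0) (blockOf μ hsum i j0) = 0
    rw [eb_apply, if_neg hj0]

section Act

variable {H : Type} [Ring H] [Algebra ℂ H] (v : ℂ) (T : ℕ → H)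
    (act : ((Fin r → Fin n) → ℂ) → H → ((Fin r → Fin n) → ℂ))
    (hact_addw : ∀ w w' h, act (w + w') h = act w h + act w' h)
    (hact_smulw : ∀ (c : ℂ) w h, act (c • w) h = c • act w h)
    (hact_addh : ∀ w h h', act w (h + h') = act w h + act w h')
    (hact_smulh : ∀ w (c : ℂ) h, act w (c • h) = c • act w h)
    (hact_one : ∀ w, act w 1 = w)
    (hact_mul : ∀ w h h', act w (h * h') = act (act w h) h')
    (hact_basis : ∀ (i : Fin r → Fin n) (k : ℕ) (hk : k + 1 < r),
      act (eb i) (T k) =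
        if i ⟨k, by omega⟩ = i ⟨k + 1, hk⟩ then (v ^ 2 : ℂ) • eb i
        else if i ⟨k, by omega⟩ < i ⟨k + 1, hk⟩ then
          v • eb (i ∘ Equiv.swap ⟨k, by omega⟩ ⟨k + 1, hk⟩)
        else
          v • eb (i ∘ Equiv.swap ⟨k, by omega⟩ ⟨k + 1, hk⟩) + (v ^ 2 - 1 : ℂ) • eb i)
    (actB : ∀ j : Fin p, ((Fin (μ j) → Fin n) → ℂ) → H → ((Fin (μ j) → Fin n) → ℂ))
    (hactB_addw : ∀ j w w' h, actB j (w + w') h = actB j w h + actB j w' h)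
    (hactB_smulw : ∀ j (c : ℂ) w h, actB j (c • w) h = c • actB j w h)
    (hactB_addh : ∀ j w h h', actB j w (h + h') = actB j w h + actB j w h')
    (hactB_smulh : ∀ j w (c : ℂ) h, actB j w (c • h) = c • actB j w h)
    (hactB_one : ∀ j w, actB j w 1 = w)
    (hactB_mul : ∀ j w h h', actB j w (h * h') = actB j (actB j w h) h')
    (hactB_basis : ∀ (j : Fin p) (b : Fin (μ j) → Fin n) (k : ℕ)
        (hk1 : off μ j ≤ k) (hk2 : k + 2 ≤ off μ j + μ j),
      actB j (eb b) (T k) =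
        if b ⟨k - off μ j, by omega⟩ = b ⟨k - off μ j + 1, by omega⟩ then
          (v ^ 2 : ℂ) • eb b
        else if b ⟨k - off μ j, by omega⟩ < b ⟨k - off μ j + 1, by omega⟩ then
          v • eb (b ∘ Equiv.swap ⟨k - off μ j, by omega⟩ ⟨k - off μ j + 1, by omega⟩)
        else
          v • eb (b ∘ Equiv.swap ⟨k - off μ j, by omega⟩ ⟨k - off μ j + 1, by omega⟩) +
            (v ^ 2 - 1 : ℂ) • eb b)

include hact_addw hact_smulw hact_basis hactB_addw hactB_smulw hactB_basis in
lemma act_membed_T (j₀ : Fin p) (k : ℕ) (hk : inBlock μ j₀ k)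
    (g : ∀ j : Fin p, (Fin (μ j) → Fin n) → ℂ) :
    act (membed μ hsum g) (T k) =
      membed μ hsum (Function.update g j₀ (actB j₀ (g j₀) (T k))) := by
  have hk2r : k + 1 < r := inBlock_lt μ hsum hk
  have hk1r : k < r := by omega
  obtain ⟨hko, hkm⟩ := hk
  have hlt1 : k - off μ j₀ < μ j₀ := by omega
  have hlt2 : k - off μ j₀ + 1 < μ j₀ := by omega
  have geL := GEval (v := v) (a := (⟨k, hk1r⟩ : Fin r)) (b := (⟨k + 1, hk2r⟩ : Fin r))
    (E := fun w => act w (T k)) (fun x y => hact_addw x y (T k))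
    (fun c x => hact_smulw c x (T k)) (fun c => hact_basis c k hk2r)
    (by simp [Fin.ext_iff])
  have geR := GEval (v := v) (a := (⟨k - off μ j₀, hlt1⟩ : Fin (μ j₀)))
    (b := (⟨k - off μ j₀ + 1, hlt2⟩ : Fin (μ j₀)))
    (E := fun y => actB j₀ y (T k)) (fun x y => hactB_addw j₀ x y (T k))
    (fun c x => hactB_smulw j₀ c x (T k)) (fun c => hactB_basis j₀ c k hko hkm)
    (by simp [Fin.ext_iff])
  funext i
  rw [membed_update_apply μ hsum g j₀ (actB j₀ (g j₀) (T k)) i]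
  simp only [geL, geR]
  have c1 : blockOf μ hsum i j₀ ⟨k - off μ j₀, hlt1⟩ = i ⟨k, hk1r⟩ := by
    rw [blockOf_apply]
    congr 1
    exact Fin.ext (by simp; omega)
  have c2 : blockOf μ hsum i j₀ ⟨k - off μ j₀ + 1, hlt2⟩ = i ⟨k + 1, hk2r⟩ := by
    rw [blockOf_apply]
    congr 1
    exact Fin.ext (by simp; omega)
  have hswap_self := blockOf_swap_self μ hsum ⟨hko, hkm⟩ hk1r hk2r hlt1 hlt2 i
  have hswap_other : ∀ j ∈ Finset.univ.erase j₀,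
      g j (blockOf μ hsum (i ∘ Equiv.swap ⟨k, hk1r⟩ ⟨k + 1, hk2r⟩) j)
        = g j (blockOf μ hsum i j) := by
    intro j hj
    rw [blockOf_swap_ne μ hsum ⟨hko, hkm⟩ (Finset.ne_of_mem_erase hj) hk1r hk2r i]
  have hmg := membed_factor μ hsum g j₀ i
  have hmg2 : membed μ hsum g (i ∘ Equiv.swap ⟨k, hk1r⟩ ⟨k + 1, hk2r⟩) =
      g j₀ (blockOf μ hsum i j₀ ∘
          Equiv.swap ⟨k - off μ j₀, hlt1⟩ ⟨k - off μ j₀ + 1, hlt2⟩) *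
        ∏ j ∈ Finset.univ.erase j₀, g j (blockOf μ hsum i j) := by
    rw [membed_factor μ hsum g j₀ _, hswap_self]
    congr 1
    exact Finset.prod_congr rfl hswap_other
  simp only [c1, c2]
  split_ifs with h1 h2
  · rw [hmg]; ring
  · rw [hmg2]; ring
  · rw [hmg2, hmg]; ring

include hact_smulh hact_one in
lemma act_algebraMap (x : (Fin r → Fin n) → ℂ) (c : ℂ) :
    act x (algebraMap ℂ H c) = c • x := by
  rw [Algebra.algebraMap_eq_smul_one, hact_smulh, hact_one]

include hactB_smulh hactB_one in
lemma actB_algebraMap (j : Fin p) (y : (Fin (μ j) → Fin n) → ℂ) (c : ℂ) :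
    actB j y (algebraMap ℂ H c) = c • y := by
  rw [Algebra.algebraMap_eq_smul_one, hactB_smulh, hactB_one]

include hact_addw hact_smulw hact_addh hact_smulh hact_one hact_mul hact_basis
  hactB_addw hactB_smulw hactB_addh hactB_smulh hactB_one hactB_mul hactB_basis in
lemma act_membed (j₀ : Fin p) {h : H} (hh : h ∈ blockAlg μ T j₀) :
    ∀ g : ∀ j : Fin p, (Fin (μ j) → Fin n) → ℂ,
      act (membed μ hsum g) h =
        membed μ hsum (Function.update g j₀ (actB j₀ (g j₀) h)) := by
  induction hh using Algebra.adjoin_induction with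
  | mem x hx =>
    obtain ⟨k, hk, rfl⟩ := hx
    intro g
    exact act_membed_T μ hsum v T act hact_addw hact_smulw hact_basis actB
      hactB_addw hactB_smulw hactB_basis j₀ k hk g
  | algebraMap c =>
    intro g
    rw [act_algebraMap act hact_smulh hact_one,
      actB_algebraMap μ actB hactB_smulh hactB_one,
      membed_update_smul, Function.update_eq_self]
  | add x y hx hy ihx ihy =>
    intro g
    rw [hact_addh, ihx g, ihy g, hactB_addh, membed_update_add]
  | mul x y hx hy ihx ihy =>
    intro g
    rw [hact_mul, ihx g, ihy (Function.update g j₀ (actB j₀ (g j₀) x)),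
      Function.update_self, Function.update_idem, hactB_mul]

include hact_addw hact_smulw hact_addh hact_smulh hact_one hact_mul hact_basis
  hactB_addw hactB_smulw hactB_addh hactB_smulh hactB_one hactB_mul hactB_basis in
lemma act_membed_list (φ : Fin p → H) (hφ : ∀ j, φ j ∈ blockAlg μ T j) :
    ∀ (L : List (Fin p)), L.Nodup →
      ∀ g : ∀ j : Fin p, (Fin (μ j) → Fin n) → ℂ,
        act (membed μ hsum g) ((L.map φ).prod) =
          membed μ hsum (fun j => if j ∈ L then actB j (g j) (φ j) else g j) := by
  intro L
  induction L with
  | nil =>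
    intro _ g
    simp only [List.map_nil, List.prod_nil, hact_one]
    apply congrArg
    funext j
    simp
  | cons a L ih =>
    intro hnd g
    rw [List.map_cons, List.prod_cons, hact_mul,
      show act (membed μ hsum g) (φ a) =
        membed μ hsum (Function.update g a (actB a (g a) (φ a))) from
        act_membed μ hsum v T act hact_addw hact_smulw hact_addh hact_smulh hact_one
          hact_mul hact_basis actB hactB_addw hactB_smulw hactB_addh hactB_smulh
          hactB_one hactB_mul hactB_basis a (hφ a) g,
      ih (List.Nodup.of_cons hnd) (Function.update g a (actB a (g a) (φ a)))]
    apply congrArg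
    funext j
    by_cases hj : j = a
    · subst hj
      have hja : j ∉ L := (List.nodup_cons.mp hnd).1
      simp [hja]
    · by_cases hjL : j ∈ L
      · simp [hjL, hj, Function.update_of_ne hj]
      · simp [hjL, hj, Function.update_of_ne hj]

include hact_smulw hact_one hact_mul in
lemma act_eigen_list (φ : Fin p → H) (c : Fin p → ℂ) (x : (Fin r → Fin n) → ℂ)
    (hx : ∀ j, act x (φ j) = c j • x) :
    ∀ L : List (Fin p), act x ((L.map φ).prod) = (L.map c).prod • x := by
  intro L
  induction L with
  | nil => simp [hact_one]
  | cons a L ih =>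
    rw [List.map_cons, List.prod_cons, hact_mul, hx a, hact_smulw, ih,
      List.map_cons, List.prod_cons, mul_smul]

end Act

end St7

open St7 in
theorem statement7
    (v : ℂ) (hv : v ≠ 0) (hroot : ∀ k : ℕ, 0 < k → v ^ k ≠ 1)
    (n r p : ℕ) (hn : 1 ≤ n) (hr : 1 ≤ r)
    (μ : Fin p → ℕ) (hsum : ∑ j, μ j = r)
    -- `H` is the Hecke algebra `ℋ(r)_ℂ`, presented by generators `T k = T_{k+1}` (`k+1 < r`):
    (H : Type) [Ring H] [Algebra ℂ H] (T : ℕ → H)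
    (hquad : ∀ k : ℕ, k + 1 < r → (T k + 1) * (T k - algebraMap ℂ H (v ^ 2)) = 0)
    (hbraid : ∀ k : ℕ, k + 2 < r → T k * T (k + 1) * T k = T (k + 1) * T k * T (k + 1))
    (hcomm : ∀ k l : ℕ, k + 1 < r → l + 1 < r → k + 1 < l → T k * T l = T l * T k)
    (hgen : Algebra.adjoin ℂ {x : H | ∃ k, k + 1 < r ∧ x = T k} = ⊤)
    (huniv : ∀ (A : Type) [Ring A] [Algebra ℂ A] (t : ℕ → A),
      (∀ k : ℕ, k + 1 < r → (t k + 1) * (t k - algebraMap ℂ A (v ^ 2)) = 0) →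
      (∀ k : ℕ, k + 2 < r → t k * t (k + 1) * t k = t (k + 1) * t k * t (k + 1)) →
      (∀ k l : ℕ, k + 1 < r → l + 1 < r → k + 1 < l → t k * t l = t l * t k) →
      ∃ φ : H →ₐ[ℂ] A, ∀ k : ℕ, k + 1 < r → φ (T k) = t k)
    -- the right `H`-module structure on the tensor space `Ω_{n,ℂ}^{⊗r}`:
    (act : ((Fin r → Fin n) → ℂ) → H → ((Fin r → Fin n) → ℂ))
    (hact_addw : ∀ w w' h, act (w + w') h = act w h + act w' h)
    (hact_smulw : ∀ (c : ℂ) w h, act (c • w) h = c • act w h)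
    (hact_addh : ∀ w h h', act w (h + h') = act w h + act w h')
    (hact_smulh : ∀ w (c : ℂ) h, act w (c • h) = c • act w h)
    (hact_one : ∀ w, act w 1 = w)
    (hact_mul : ∀ w h h', act w (h * h') = act (act w h) h')
    (hact_basis : ∀ (i : Fin r → Fin n) (k : ℕ) (hk : k + 1 < r),
      act (eb i) (T k) =
        if i ⟨k, by omega⟩ = i ⟨k + 1, hk⟩ then (v ^ 2 : ℂ) • eb i
        else if i ⟨k, by omega⟩ < i ⟨k + 1, hk⟩ then
          v • eb (i ∘ Equiv.swap ⟨k, by omega⟩ ⟨k + 1, hk⟩)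
        else
          v • eb (i ∘ Equiv.swap ⟨k, by omega⟩ ⟨k + 1, hk⟩) + (v ^ 2 - 1 : ℂ) • eb i)
    -- the right action of `ℋ_{μ,j} ⊆ H` on the `j`-th tensor factor `Ω_{n,ℂ}^{⊗μ_j}`,
    -- given by the same formulas (in local positions):
    (actB : ∀ j : Fin p, ((Fin (μ j) → Fin n) → ℂ) → H → ((Fin (μ j) → Fin n) → ℂ))
    (hactB_addw : ∀ j w w' h, actB j (w + w') h = actB j w h + actB j w' h)
    (hactB_smulw : ∀ j (c : ℂ) w h, actB j (c • w) h = c • actB j w h)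
    (hactB_addh : ∀ j w h h', actB j w (h + h') = actB j w h + actB j w h')
    (hactB_smulh : ∀ j w (c : ℂ) h, actB j w (c • h) = c • actB j w h)
    (hactB_one : ∀ j w, actB j w 1 = w)
    (hactB_mul : ∀ j w h h', actB j w (h * h') = actB j (actB j w h) h')
    (hactB_basis : ∀ (j : Fin p) (b : Fin (μ j) → Fin n) (k : ℕ)
        (hk1 : off μ j ≤ k) (hk2 : k + 2 ≤ off μ j + μ j),
      actB j (eb b) (T k) =
        if b ⟨k - off μ j, by omega⟩ = b ⟨k - off μ j + 1, by omega⟩ then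
          (v ^ 2 : ℂ) • eb b
        else if b ⟨k - off μ j, by omega⟩ < b ⟨k - off μ j + 1, by omega⟩ then
          v • eb (b ∘ Equiv.swap ⟨k - off μ j, by omega⟩ ⟨k - off μ j + 1, by omega⟩)
        else
          v • eb (b ∘ Equiv.swap ⟨k - off μ j, by omega⟩ ⟨k - off μ j + 1, by omega⟩) +
            (v ^ 2 - 1 : ℂ) • eb b) :
    -- conclusion: `Ω^{⊗r}·𝒥_μ = (Ω^{⊗μ_1}·𝒥_{μ,1}) ⊗ ⋯ ⊗ (Ω^{⊗μ_p}·𝒥_{μ,p})`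
    Submodule.span ℂ
        {x : (Fin r → Fin n) → ℂ | ∃ (w : (Fin r → Fin n) → ℂ) (h : H),
          h ∈ bigJ v μ T ∧ x = act w h}
      = Submodule.span ℂ
        {F : (Fin r → Fin n) → ℂ | ∃ g : (j : Fin p) → ((Fin (μ j) → Fin n) → ℂ),
          (∀ j : Fin p, g j ∈ Submodule.span ℂ
            {y : (Fin (μ j) → Fin n) → ℂ | ∃ (w : (Fin (μ j) → Fin n) → ℂ) (h : H),
              h ∈ smallJ v μ T j ∧ y = actB j w h}) ∧
          F = fun i => ∏ j : Fin p, g j (blockOf μ hsum i j)} := by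
  classical
  have hoff : ∀ j : Fin p, off μ j + μ j ≤ r := fun j => by
    have h1 := St7.off_add_le μ j
    rw [hsum] at h1
    exact h1
  set φ : Fin p → H := fun j => St7.Yel v T (off μ j) (μ j) with hφdef
  have hTmem : ∀ (j : Fin p) (k : ℕ), inBlock μ j k → T k ∈ blockAlg μ T j :=
    fun j k hk => Algebra.subset_adjoin ⟨k, hk, rfl⟩
  have hYmem : ∀ j, φ j ∈ blockAlg μ T j := fun j =>
    St7.Yel_mem v T (blockAlg μ T j) (off μ j) (μ j)
      (fun k h1 h2 => hTmem j k ⟨h1, h2⟩) (μ j) le_rfl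
  have hYT : ∀ (j : Fin p) (k : ℕ), inBlock μ j k → φ j * T k = - φ j := by
    intro j k hk
    obtain ⟨hk1, hk2⟩ := hk
    have hm : μ j - 1 + 1 = μ j := by omega
    have h2 := St7.Yel_Tk v T r hv hquad hbraid hcomm (off μ j) (μ j)
      (hoff j) (μ j - 1) (by omega) k hk1 (by omega)
    rwa [hm] at h2
  have hvvne := St7.negvv_ne v hv hroot
  have hYfac : ∀ (j : Fin p) (k : ℕ), inBlock μ j k →
      ∃ h' ∈ blockAlg μ T j, φ j = h' * heckeC v T k := by
    intro j k hk
    refine ⟨(-(v⁻¹ + v))⁻¹ • φ j, Subalgebra.smul_mem _ (hYmem j) _, ?_⟩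
    have h1 : φ j * heckeC v T k = (-(v⁻¹ + v)) • φ j := by
      rw [heckeC, mul_sub, mul_smul_comm, mul_smul_comm, mul_one, hYT j k hk]
      module
    rw [smul_mul_assoc, h1, smul_smul, inv_mul_cancel₀ hvvne, one_smul]
  have hYsmall : ∀ j, φ j ∈ smallJ v μ T j := fun j =>
    ⟨hYmem j, fun k hk => hYfac j k hk⟩
  -- the product of the block antisymmetrizers
  set Lp : List (Fin p) := List.finRange p with hLp
  set Yall : H := (Lp.map φ).prod with hYalldef
  have hYcomm : ∀ (j j' : Fin p), j ≠ j' → Commute (φ j) (φ j') := by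
    intro j j' hne
    apply St7.commute_adjoin (S := {x : H | ∃ k, inBlock μ j' k ∧ x = T k})
      ?_ (hYmem j')
    rintro y ⟨k', hk', rfl⟩
    have h1 : Commute (T k') (φ j) := by
      apply St7.commute_adjoin (S := {x : H | ∃ k, inBlock μ j k ∧ x = T k})
        ?_ (hYmem j)
      rintro z ⟨k, hk, rfl⟩
      have hkr := St7.inBlock_lt μ hsum hk
      have hkr' := St7.inBlock_lt μ hsum hk'
      rcases lt_or_gt_of_ne hne with h | h
      · have hof := St7.off_lt_lt μ h
        obtain ⟨a1, a2⟩ := hk; obtain ⟨b1, b2⟩ := hk'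
        exact (hcomm k k' hkr hkr' (by omega)).symm
      · have hof := St7.off_lt_lt μ h
        obtain ⟨a1, a2⟩ := hk; obtain ⟨b1, b2⟩ := hk'
        exact hcomm k' k hkr' hkr (by omega)
    exact h1.symm
  have hYallJ : Yall ∈ bigJ v μ T := by
    intro k hk
    obtain ⟨j, hkj⟩ := hk
    obtain ⟨h', _, hfac'⟩ := hYfac j k hkj
    have hjmem : j ∈ Lp := List.mem_finRange j
    have hperm : (Lp.map φ).Perm (((Lp.erase j).map φ) ++ [φ j]) := by
      have h1 : Lp.Perm (j :: Lp.erase j) := List.perm_cons_erase hjmem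
      have h2 : (j :: Lp.erase j).Perm (Lp.erase j ++ [j]) :=
        (List.perm_append_singleton j _).symm
      have := (h1.trans h2).map φ
      rwa [List.map_append] at this
    have hpair : (Lp.map φ).Pairwise Commute := by
      rw [List.pairwise_map]
      apply List.Pairwise.imp ?_ (List.nodup_finRange p)
      intro a b hab
      exact hYcomm a b hab
    have hYeq : Yall = ((Lp.erase j).map φ).prod * φ j := by
      rw [hYalldef, hperm.prod_eq' hpair, List.prod_append, List.prod_singleton]
    exact ⟨((Lp.erase j).map φ).prod * h', by
      rw [hYeq, hfac', ← mul_assoc]⟩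
  -- scalars
  set cv : Fin p → ℂ := fun j => St7.cScal v (μ j) with hcvdef
  set Cv : ℂ := (Lp.map cv).prod with hCvdef
  have hCv : Cv ≠ 0 := by
    apply List.prod_ne_zero
    intro h0
    rw [List.mem_map] at h0
    obtain ⟨j, _, hj⟩ := h0
    exact St7.cScal_ne v hv hroot (μ j) hj
  -- eigen property for global action
  have heigG : ∀ (x : (Fin r → Fin n) → ℂ) (k : ℕ) (j : Fin p), inBlock μ j k →
      (∃ z, x = act z (heckeC v T k)) → act x (T k) = -x := by
    rintro x k j hk ⟨z, rfl⟩
    have hk2 : k + 1 < r := St7.inBlock_lt μ hsum hk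
    have hk1 : k < r := by omega
    have hab : (⟨k, hk1⟩ : Fin r) ≠ ⟨k + 1, hk2⟩ := by simp [Fin.ext_iff]
    have hC : act z (heckeC v T k) =
        v⁻¹ • (fun w => act w (T k)) z - v • z := by
      show act z (v⁻¹ • T k - v • 1) = _
      have he : (v⁻¹ • T k - v • (1:H)) = v⁻¹ • T k + (-v) • (1:H) := by module
      rw [he, hact_addh, hact_smulh, hact_smulh, hact_one, neg_smul,
        ← sub_eq_add_neg]
    rw [hC]
    exact St7.KcondP_eigen v ⟨k, hk1⟩ ⟨k + 1, hk2⟩ (fun w => act w (T k))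
      (fun x y => hact_addw x y (T k)) (fun c x => hact_smulw c x (T k))
      (fun c => hact_basis c k hk2) hab _
      (St7.KcondP_CE v ⟨k, hk1⟩ ⟨k + 1, hk2⟩ (fun w => act w (T k))
        (fun x y => hact_addw x y (T k)) (fun c x => hact_smulw c x (T k))
        (fun c => hact_basis c k hk2) hv hab z)
  -- eigen property for block actions
  have heigB : ∀ (j : Fin p) (y : (Fin (μ j) → Fin n) → ℂ) (k : ℕ), inBlock μ j k →
      (∃ z, y = actB j z (heckeC v T k)) → actB j y (T k) = -y := by
    rintro j y k hk ⟨z, rfl⟩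
    obtain ⟨ha1, ha2⟩ := hk
    have hl1 : k - off μ j < μ j := by omega
    have hl2 : k - off μ j + 1 < μ j := by omega
    have hab : (⟨k - off μ j, hl1⟩ : Fin (μ j)) ≠ ⟨k - off μ j + 1, hl2⟩ := by
      simp [Fin.ext_iff]
    have hC : actB j z (heckeC v T k) =
        v⁻¹ • (fun y => actB j y (T k)) z - v • z := by
      show actB j z (v⁻¹ • T k - v • 1) = _
      have he : (v⁻¹ • T k - v • (1:H)) = v⁻¹ • T k + (-v) • (1:H) := by module
      rw [he, hactB_addh, hactB_smulh, hactB_smulh, hactB_one, neg_smul,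
        ← sub_eq_add_neg]
    rw [hC]
    exact St7.KcondP_eigen v ⟨k - off μ j, hl1⟩ ⟨k - off μ j + 1, hl2⟩
      (fun y => actB j y (T k))
      (fun x y => hactB_addw j x y (T k)) (fun c x => hactB_smulw j c x (T k))
      (fun c => hactB_basis j c k ha1 ha2) hab _
      (St7.KcondP_CE v ⟨k - off μ j, hl1⟩ ⟨k - off μ j + 1, hl2⟩
        (fun y => actB j y (T k))
        (fun x y => hactB_addw j x y (T k)) (fun c x => hactB_smulw j c x (T k))
        (fun c => hactB_basis j c k ha1 ha2) hv hab z)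
  apply le_antisymm
  · -- LHS ≤ RHS
    rw [Submodule.span_le]
    rintro x ⟨w, h, hh, rfl⟩
    have hxeig : ∀ (k : ℕ) (j : Fin p), inBlock μ j k →
        act (act w h) (T k) = -(act w h) := by
      intro k j hk
      obtain ⟨h'', hfac''⟩ := hh k ⟨j, hk⟩
      refine heigG (act w h) k j hk ⟨act w h'', ?_⟩
      rw [hfac'', hact_mul]
    have hxY : ∀ j : Fin p, act (act w h) (φ j) = cv j • act w h := fun j =>
      St7.A_Yel v T act hact_smulw hact_one hact_mul hact_addh hact_smulh
        (off μ j) (μ j) (act w h)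
        (fun k h1 h2 => hxeig k j ⟨h1, h2⟩) (μ j) le_rfl
    have hxYall : act (act w h) Yall = Cv • act w h :=
      St7.act_eigen_list act hact_smulw hact_one hact_mul φ cv (act w h)
        hxY Lp
    have hx1 : act w h = Cv⁻¹ • act (act w h) Yall := by
      rw [hxYall, smul_smul, inv_mul_cancel₀ hCv, one_smul]
    rw [SetLike.mem_coe, hx1]
    apply Submodule.smul_mem
    have hexp : act (act w h) Yall =
        ∑ I : Fin r → Fin n, act w h I • act (eb I) Yall := by
      let La : ((Fin r → Fin n) → ℂ) →ₗ[ℂ] ((Fin r → Fin n) → ℂ) :=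
        { toFun := fun z => act z Yall
          map_add' := fun z z' => hact_addw z z' Yall
          map_smul' := fun c z => hact_smulw c z Yall }
      show La (act w h) = ∑ I : Fin r → Fin n, act w h I • La (eb I)
      conv_lhs => rw [St7.ebExpand (act w h)]
      rw [map_sum]
      simp [La]
    rw [hexp]
    apply Submodule.sum_mem
    intro I _
    apply Submodule.smul_mem
    apply Submodule.subset_span
    have hebm : eb I = membed μ hsum (fun j => eb (blockOf μ hsum I j)) := by
      rw [St7.eb_blocks, St7.glue_blockOf]
    refine ⟨fun j => actB j (eb (blockOf μ hsum I j)) (φ j),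
      fun j => Submodule.subset_span ⟨eb (blockOf μ hsum I j), φ j, hYsmall j, rfl⟩, ?_⟩
    rw [hebm, St7.act_membed_list μ hsum v T act hact_addw hact_smulw hact_addh
      hact_smulh hact_one hact_mul hact_basis actB hactB_addw hactB_smulw
      hactB_addh hactB_smulh hactB_one hactB_mul hactB_basis φ hYmem Lp
      (List.nodup_finRange p) (fun j => eb (blockOf μ hsum I j))]
    show membed μ hsum _ = membed μ hsum _
    apply congrArg
    funext j
    rw [if_pos (List.mem_finRange j)]
  · -- RHS ≤ LHS
    rw [Submodule.span_le]
    rintro F ⟨g, hg, rfl⟩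
    have hgeig : ∀ j, actB j (g j) (φ j) = cv j • g j := by
      intro j
      have h00 : ∀ (h : H), actB j 0 h = 0 := by
        intro h
        have : (0 : (Fin (μ j) → Fin n) → ℂ) = (0 : ℂ) • 0 := by simp
        rw [this, hactB_smulw, zero_smul, zero_smul]
      let Ej : Submodule ℂ ((Fin (μ j) → Fin n) → ℂ) :=
        { carrier := {y | actB j y (φ j) = cv j • y}
          add_mem' := by
            intro y z hy hz
            show actB j (y + z) (φ j) = cv j • (y + z)
            rw [hactB_addw, hy, hz, smul_add]
          zero_mem' := by
            show actB j 0 (φ j) = cv j • (0 : (Fin (μ j) → Fin n) → ℂ)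
            rw [h00, smul_zero]
          smul_mem' := by
            intro c y hy
            show actB j (c • y) (φ j) = cv j • (c • y)
            rw [hactB_smulw, hy, smul_comm] }
      have hspan : Submodule.span ℂ
          {y : (Fin (μ j) → Fin n) → ℂ | ∃ (w : (Fin (μ j) → Fin n) → ℂ) (h : H),
            h ∈ smallJ v μ T j ∧ y = actB j w h} ≤ Ej := by
        rw [Submodule.span_le]
        rintro y ⟨w, h, hsm, rfl⟩
        show actB j (actB j w h) (φ j) = cv j • actB j w h
        apply St7.A_Yel v T (actB j) (hactB_smulw j) (hactB_one j) (hactB_mul j)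
          (hactB_addh j) (hactB_smulh j) (off μ j) (μ j) (actB j w h)
          ?_ (μ j) le_rfl
        intro k h1 h2
        obtain ⟨h', _, hfac'⟩ := hsm.2 k ⟨h1, h2⟩
        refine heigB j (actB j w h) k ⟨h1, h2⟩ ⟨actB j w h', ?_⟩
        rw [hfac', hactB_mul]
      exact hspan (hg j)
    have hFY : act (membed μ hsum g) Yall = Cv • membed μ hsum g := by
      rw [St7.act_membed_list μ hsum v T act hact_addw hact_smulw hact_addh
        hact_smulh hact_one hact_mul hact_basis actB hactB_addw hactB_smulw
        hactB_addh hactB_smulh hactB_one hactB_mul hactB_basis φ hYmem Lp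
        (List.nodup_finRange p) g]
      have he1 : (fun j => if j ∈ Lp then actB j (g j) (φ j) else g j) =
          fun j => cv j • g j := by
        funext j
        rw [if_pos (List.mem_finRange j), hgeig j]
      rw [he1]
      funext i
      show ∏ j, (cv j • g j) (blockOf μ hsum i j) = Cv • (membed μ hsum g) i
      simp only [Pi.smul_apply, smul_eq_mul]
      rw [Finset.prod_mul_distrib]
      congr 1
    have hFfin : membed μ hsum g = act (Cv⁻¹ • membed μ hsum g) Yall := by
      rw [hact_smulw, hFY, smul_smul, inv_mul_cancel₀ hCv, one_smul]
    show (fun i => ∏ j, g j (blockOf μ hsum i j)) ∈ _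
    have hFm : (fun i => ∏ j, g j (blockOf μ hsum i j)) = membed μ hsum g := rfl
    rw [hFm, hFfin]
    exact Submodule.subset_span ⟨Cv⁻¹ • membed μ hsum g, Yall, hYallJ, rfl⟩

end
end
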